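/- arXiv:2512.18825 — 2 statements merged into one kernel-verified Lean document; each statement's English description precedes it below -/
import Mathlib

section
/- Let K be a number field, let f : P^1 → P^1 be a rational map of degree d ≥ 2 defined over K, and let α ∈ P^1(K). If f is a Chebyshev map, i.e. f is PGL_2(K̄)-conjugate to T_d(x) or to −T_d(x) where T_d is the d-th Chebyshev polynomial, then the Minkowski dimension dim(G_{f,α}) exists and dim(G_{f,α}) = 0. -/
open scoped Classical

noncomputable section

/-! ### Minkowski dimension machinery for groups of automorphisms of rooted trees

A rooted tree is presented by its levels `V 0, V 1, V 2, …` (with `V 0` the root level)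
together with parent maps `V (n+1) → V n`.  An automorphism is a family of permutations
of the levels commuting with the parent maps; it is in particular determined by a point of
`∀ k, Equiv.Perm (V k)`.  The restriction `r_n σ` of `σ` to the height-`n` subtree is the
tuple `(σ 0, …, σ n)`, and the natural metric is
`d(σ,τ) = inf { d!^{-(dⁿ-1)/(d-1)} : r_n σ = r_n τ }`. -/

/-- The exponent `(dⁿ - 1)/(d - 1) = 1 + d + ⋯ + d^(n-1)`. -/
def scaleExp (d n : ℕ) : ℕ := ∑ i ∈ Finset.range n, d ^ i

/-- The scale `ε_n = d!^{-(dⁿ-1)/(d-1)}`, i.e. `1/|Aut(Tₙᶜᵒᵐ)|`. -/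
def treeScale (d n : ℕ) : ℝ := ((d.factorial : ℝ) ^ scaleExp d n)⁻¹

/-- Two families of level permutations restrict to the same automorphism of the
height-`n` subtree. -/
def AgreeUpTo {V : ℕ → Type*} (n : ℕ) (σ τ : ∀ k, Equiv.Perm (V k)) : Prop :=
  ∀ k, k ≤ n → σ k = τ k

/-- The natural metric on automorphisms of a rooted `d`-ary tree:
`d(σ,τ) = inf { d!^{-(dⁿ-1)/(d-1)} : σ and τ agree on the height-n subtree }`. -/
def treeDist {V : ℕ → Type*} (d : ℕ) (σ τ : ∀ k, Equiv.Perm (V k)) : ℝ :=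
  sInf {x : ℝ | ∃ n : ℕ, AgreeUpTo n σ τ ∧ x = treeScale d n}

/-- `N_{ε_n}(G)`: the least number of balls of radius `ε_n = treeScale d n` needed to
cover `G`. -/
def coverNum {V : ℕ → Type*} (d : ℕ) (G : Set (∀ k, Equiv.Perm (V k))) (n : ℕ) : ℕ :=
  sInf {m : ℕ | ∃ s : Finset (∀ k, Equiv.Perm (V k)), s.card = m ∧
    G ⊆ ⋃ σ ∈ s, {τ | treeDist d σ τ ≤ treeScale d n}}

/-- The lower Minkowski dimension `liminf_{ε → 0} log N_ε(G) / log (1/ε)` (computed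
along the scales `ε_n` of the metric). -/
def dimLower {V : ℕ → Type*} (d : ℕ) (G : Set (∀ k, Equiv.Perm (V k))) : ℝ :=
  Filter.liminf
    (fun n : ℕ => Real.log (coverNum d G n : ℝ) / Real.log (1 / treeScale d n)) Filter.atTop

/-- The upper Minkowski dimension `limsup_{ε → 0} log N_ε(G) / log (1/ε)` (computed
along the scales `ε_n` of the metric). -/
def dimUpper {V : ℕ → Type*} (d : ℕ) (G : Set (∀ k, Equiv.Perm (V k))) : ℝ :=
  Filter.limsup
    (fun n : ℕ => Real.log (coverNum d G n : ℝ) / Real.log (1 / treeScale d n)) Filter.atTop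

/-- The Minkowski dimension of `G` exists and equals `x`. -/
def HasDim {V : ℕ → Type*} (d : ℕ) (G : Set (∀ k, Equiv.Perm (V k))) (x : ℝ) : Prop :=
  dimLower d G = x ∧ dimUpper d G = x

/-- `G` is closed for the natural metric. -/
def IsDistClosed {V : ℕ → Type*} (d : ℕ) (G : Set (∀ k, Equiv.Perm (V k))) : Prop :=
  ∀ σ, (∀ ε : ℝ, 0 < ε → ∃ τ ∈ G, treeDist d σ τ ≤ ε) → σ ∈ G

/-- The closure of `G` for the natural metric. -/
def distClosure {V : ℕ → Type*} (d : ℕ) (G : Set (∀ k, Equiv.Perm (V k))) :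
    Set (∀ k, Equiv.Perm (V k)) :=
  {σ | ∀ ε : ℝ, 0 < ε → ∃ τ ∈ G, treeDist d σ τ ≤ ε}

/-- `|r_n(G)|`: the cardinality of the restriction of `G` to the height-`n` subtree. -/
def levelCard {V : ℕ → Type*} (G : Set (∀ k, Equiv.Perm (V k))) (n : ℕ) : ℕ :=
  Nat.card ((fun (σ : ∀ k, Equiv.Perm (V k)) (k : Fin (n + 1)) => σ k.1) '' G)

end
noncomputable section

/-- A fixed algebraic closure `K̄` of `K`. -/
abbrev Kbar (K : Type*) [Field K] : Type _ := AlgebraicClosure K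

/-- The level-`n` vertices of the preimage tree of `α` under `φ`: the set
`φ^{-n}(α)`. -/
abbrev preV {Pts : Type*} (φ : Pts → Pts) (α : Pts) (n : ℕ) : Type _ :=
  {β : Pts // φ^[n] β = α}

/-- The parent map of the preimage tree: a vertex `β ∈ φ^{-(n+1)}(α)` is joined to
`φ(β) ∈ φ^{-n}(α)`. -/
def preParent {Pts : Type*} (φ : Pts → Pts) (α : Pts) (n : ℕ)
    (β : preV φ α (n + 1)) : preV φ α n :=
  ⟨φ β.1, by have h := β.2; rwa [Function.iterate_succ_apply] at h⟩

/-- The image `G_{φ,α}` of the arboreal Galois representation attached to `(φ, α)` over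
the base field `L` (an intermediate field of `K̄/K`): the set of families of level
permutations of the preimage tree induced by elements of `Gal(K̄/L)`, acting on points
via `act`. -/
def arbGal {K : Type*} [Field K] {Pts : Type*}
    (act : (Kbar K ≃ₐ[K] Kbar K) → Pts → Pts) (L : IntermediateField K (Kbar K))
    (φ : Pts → Pts) (α : Pts) : Set (∀ n, Equiv.Perm (preV φ α n)) :=
  {g | ∃ σ : Kbar K ≃ₐ[K] Kbar K, (∀ x ∈ L, σ x = x) ∧
    ∀ (n : ℕ) (β : preV φ α n), (g n β : Pts) = act σ (β : Pts)}

end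
noncomputable section

/-- The projective line `ℙ¹(L) = L ∪ {∞}`, with `none` the point at infinity. -/
abbrev P1 (L : Type*) := Option L

/-- The action on `ℙ¹(A)` of the rational map `f = p/q` with coefficients in `K`,
for an extension field `A` of `K`.  At a finite point `x` the value is `p(x)/q(x)`
(`∞` when `q(x) = 0`), and the value at `∞` is governed by the degrees of `p` and
`q` and their leading coefficients. -/
def ratAct {K : Type*} [Field K] (p q : Polynomial K)
    (A : Type*) [Field A] [Algebra K A] : P1 A → P1 A
  | some x =>
      if Polynomial.aeval x q = 0 then none
      else some (Polynomial.aeval x p / Polynomial.aeval x q)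
  | none =>
      if q.natDegree < p.natDegree then none
      else if p.natDegree < q.natDegree then some 0
      else some (algebraMap K A (p.leadingCoeff / q.leadingCoeff))

/-- The natural action of `Gal(K̄/K)` on `ℙ¹(K̄)`. -/
def galP1 {K : Type*} [Field K] (σ : Kbar K ≃ₐ[K] Kbar K) : P1 (Kbar K) → P1 (Kbar K) :=
  Option.map σ

/-- The inclusion `ℙ¹(K) ⊆ ℙ¹(K̄)`. -/
def P1K {K : Type*} [Field K] : P1 K → P1 (Kbar K) :=
  Option.map (algebraMap K (Kbar K))

/-- The set of `L`-rational points of `ℙ¹(K̄)`, for an intermediate field `L` of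
`K̄/K`. -/
def P1Rat {K : Type*} [Field K] (L : IntermediateField K (Kbar K)) : Set (P1 (Kbar K)) :=
  {β | β = none ∨ ∃ x ∈ L, β = some x}

/-- The Möbius transformation of `ℙ¹(F)` attached to `(a b; c e) ∈ PGL₂(F)`. -/
def moebius {F : Type*} [Field F] (a b c e : F) : P1 F → P1 F
  | some x => if c * x + e = 0 then none else some ((a * x + b) / (c * x + e))
  | none => if c = 0 then none else some (a / c)

/-- The normalizing constant `C_D = log(D!)/(D-1)`. -/
def Cconst (D : ℕ) : ℝ := Real.log (D.factorial : ℝ) / ((D : ℝ) - 1)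

/-- The ramification multiplicity at a point `γ ∈ ℙ¹(A)` of the degree-`d` rational
map `f = p/q` with coefficients in `K ⊆ A`:  at a finite point `γ` with `f(γ) = c`
finite it is the order of vanishing of `p - c·q` at `γ`; the cases involving `∞` are
handled using `q` and degrees.  A point is critical when this is at least `2`. -/
def multAt {K : Type*} [Field K] (p q : Polynomial K)
    (A : Type*) [Field A] [Algebra K A] (d : ℕ) : P1 A → ℕ
  | some x =>
      match ratAct p q A (some x) with
      | some c => ((p.map (algebraMap K A)) -
          Polynomial.C c * (q.map (algebraMap K A))).rootMultiplicity x
      | none => (q.map (algebraMap K A)).rootMultiplicity x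
  | none =>
      match ratAct p q A none with
      | some c => d - ((p.map (algebraMap K A)) -
          Polynomial.C c * (q.map (algebraMap K A))).natDegree
      | none => d - q.natDegree

end
/-- The dynamical `d`-th Chebyshev polynomial `T_d`, i.e. the unique degree-`d`
polynomial with `T_d(x + x⁻¹) = x^d + x^{-d}`; it equals `2·T̃_d(x/2)` where `T̃_d` is
the classical Chebyshev polynomial of the first kind. -/
noncomputable def dynCheb (K : Type*) [Field K] (d : ℕ) : Polynomial K :=
  2 * (Polynomial.Chebyshev.T K d).comp (Polynomial.C 2⁻¹ * Polynomial.X)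


noncomputable section PartA

variable {V : ℕ → Type*} {d : ℕ}

lemma treeScale_nonneg (d n : ℕ) : 0 ≤ treeScale d n := by
  unfold treeScale; positivity

lemma one_le_factorial_real {d : ℕ} : (1 : ℝ) ≤ (d.factorial : ℝ) := by
  exact_mod_cast Nat.one_le_iff_ne_zero.2 d.factorial_ne_zero

lemma one_le_inv_treeScale (d n : ℕ) : (1:ℝ) ≤ (d.factorial : ℝ) ^ scaleExp d n :=
  one_le_pow₀ one_le_factorial_real

lemma treeDist_le_of_agree {σ τ : ∀ k, Equiv.Perm (V k)} {n : ℕ}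
    (h : AgreeUpTo n σ τ) : treeDist d σ τ ≤ treeScale d n := by
  apply csInf_le
  · exact ⟨0, fun x hx => by obtain ⟨m, -, rfl⟩ := hx; exact treeScale_nonneg d m⟩
  · exact ⟨n, h, rfl⟩

/-- the restriction map to the height-`n` subtree -/
def resMap {V : ℕ → Type*} (n : ℕ) (σ : ∀ k, Equiv.Perm (V k)) :
    ∀ k : Fin (n + 1), Equiv.Perm (V k.1) := fun k => σ k.1

variable [∀ k, Finite (V k)]

lemma exists_cover (G : Set (∀ k, Equiv.Perm (V k))) (n : ℕ) :
    ∃ s : Finset (∀ k, Equiv.Perm (V k)),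
      s.card ≤ (Set.toFinite (resMap n '' G)).toFinset.card ∧
      G ⊆ ⋃ σ ∈ s, {τ | treeDist d σ τ ≤ treeScale d n} := by
  classical
  set R := resMap (V := V) n '' G with hR
  have hRfin : R.Finite := Set.toFinite R
  have hpick : ∀ t ∈ R, ∃ σ ∈ G, resMap n σ = t := fun t ht => by
    obtain ⟨σ, hσ, rfl⟩ := ht; exact ⟨σ, hσ, rfl⟩
  let pick : (∀ k : Fin (n + 1), Equiv.Perm (V k.1)) → (∀ k, Equiv.Perm (V k)) :=
    fun t => if h : t ∈ R then (hpick t h).choose else fun _ => Equiv.refl _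
  refine ⟨hRfin.toFinset.image pick, Finset.card_image_le, fun τ hτ => ?_⟩
  have htR : resMap n τ ∈ R := ⟨τ, hτ, rfl⟩
  have hp := (hpick _ htR).choose_spec
  simp only [Set.mem_iUnion]
  refine ⟨pick (resMap n τ), ?_, ?_⟩
  · simp only [Finset.mem_image, Set.Finite.mem_toFinset]
    exact ⟨resMap n τ, htR, rfl⟩
  · have hagree : AgreeUpTo n (pick (resMap n τ)) τ := by
      intro k hk
      have : resMap n (pick (resMap n τ)) = resMap n τ := by
        simp only [pick, dif_pos htR]; exact hp.2
      have := congrFun this ⟨k, Nat.lt_succ_of_le hk⟩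
      exact this
    exact treeDist_le_of_agree hagree

lemma coverNum_le_card (G : Set (∀ k, Equiv.Perm (V k))) (n : ℕ) :
    coverNum d G n ≤ (Set.toFinite (resMap n '' G)).toFinset.card := by
  obtain ⟨s, hs, hcov⟩ := exists_cover (d := d) G n
  exact le_trans (Nat.sInf_le ⟨s, rfl, hcov⟩) hs

lemma one_le_coverNum {G : Set (∀ k, Equiv.Perm (V k))} (hG : G.Nonempty) (n : ℕ) :
    1 ≤ coverNum d G n := by
  rw [Nat.one_le_iff_ne_zero]
  intro h0
  obtain ⟨s, hs, hcov⟩ := exists_cover (d := d) G n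
  have hne : {m : ℕ | ∃ s : Finset (∀ k, Equiv.Perm (V k)), s.card = m ∧
      G ⊆ ⋃ σ ∈ s, {τ | treeDist d σ τ ≤ treeScale d n}}.Nonempty := ⟨s.card, s, rfl, hcov⟩
  have := Nat.sInf_eq_zero.1 h0
  rcases this with h | h
  · obtain ⟨t, ht0, hcov'⟩ := h
    rw [Finset.card_eq_zero] at ht0
    subst ht0
    obtain ⟨τ, hτ⟩ := hG
    simpa using hcov' hτ
  · exact absurd h (Set.nonempty_iff_ne_empty.1 hne)

theorem hasDim_zero_of_cover_poly (hd : 2 ≤ d) {G : Set (∀ k, Equiv.Perm (V k))}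
    (hG : G.Nonempty) (C : ℕ) (hC : 1 ≤ C)
    (hcov : ∀ n, coverNum d G n ≤ C * d ^ n * d ^ n) : HasDim d G 0 := by
  set a : ℕ → ℝ := fun n =>
    Real.log (coverNum d G n : ℝ) / Real.log (1 / treeScale d n) with ha
  have hfact2 : (2:ℝ) ≤ (d.factorial : ℝ) := by
    exact_mod_cast le_trans hd (Nat.self_le_factorial d)
  have hlogfact : Real.log 2 ≤ Real.log (d.factorial : ℝ) :=
    Real.log_le_log (by norm_num) hfact2
  have hlog2pos : (0:ℝ) < Real.log 2 := Real.log_pos (by norm_num)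
  -- denominator formula
  have hden : ∀ n : ℕ, Real.log (1 / treeScale d n)
      = (scaleExp d n : ℝ) * Real.log (d.factorial : ℝ) := by
    intro n
    rw [treeScale, one_div, inv_inv, Real.log_pow]
  have hdenpos : ∀ n : ℕ, 1 ≤ n → (2:ℝ)^n / 2 * Real.log 2 ≤ Real.log (1 / treeScale d n) := by
    intro n hn
    rw [hden]
    have h1 : 2 ^ (n-1) ≤ scaleExp d n := by
      calc 2 ^ (n-1) ≤ d ^ (n-1) := Nat.pow_le_pow_left hd _
        _ ≤ scaleExp d n := by
            refine Finset.single_le_sum (f := fun i => d ^ i) (fun i _ => Nat.zero_le _) ?_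
            exact Finset.mem_range.2 (by omega)
    have h2 : (2:ℝ)^n / 2 ≤ (scaleExp d n : ℝ) := by
      have : (2:ℝ)^n / 2 = (2:ℝ)^(n-1) := by
        rw [eq_comm, eq_div_iff (by norm_num), ← pow_succ]
        congr 1; omega
      rw [this]
      calc ((2:ℝ))^(n-1) = ((2^(n-1) : ℕ) : ℝ) := by push_cast; ring
        _ ≤ (scaleExp d n : ℝ) := by exact_mod_cast h1
    exact mul_le_mul h2 hlogfact hlog2pos.le (le_trans (by positivity) h2)
  have hnum : ∀ n : ℕ, Real.log (coverNum d G n : ℝ)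
      ≤ Real.log (C:ℝ) + 2 * n * Real.log d := by
    intro n
    have hcpos : (0:ℝ) < (coverNum d G n : ℝ) := by
      exact_mod_cast one_le_coverNum hG n
    have : (coverNum d G n : ℝ) ≤ (C:ℝ) * (d:ℝ)^n * (d:ℝ)^n := by
      exact_mod_cast hcov n
    calc Real.log (coverNum d G n : ℝ) ≤ Real.log ((C:ℝ) * (d:ℝ)^n * (d:ℝ)^n) :=
          Real.log_le_log hcpos this
      _ = Real.log (C:ℝ) + 2 * n * Real.log d := by
          have hCpos : (0:ℝ) < (C:ℝ) := by exact_mod_cast lt_of_lt_of_le Nat.zero_lt_one hC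
          have hdpos : (0:ℝ) < (d:ℝ) := by positivity
          rw [Real.log_mul (by positivity) (by positivity),
            Real.log_mul hCpos.ne' (by positivity), Real.log_pow]
          ring
  have hnum0 : ∀ n : ℕ, 0 ≤ Real.log (coverNum d G n : ℝ) := by
    intro n
    apply Real.log_nonneg
    exact_mod_cast one_le_coverNum hG n
  have hlogC0 : 0 ≤ Real.log (C:ℝ) := Real.log_nonneg (by exact_mod_cast hC)
  have hlogd0 : 0 ≤ Real.log (d:ℝ) :=
    Real.log_nonneg (by exact_mod_cast le_trans one_le_two hd)
  set b : ℕ → ℝ := fun n =>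
    (Real.log (C:ℝ) + 2 * n * Real.log d) / ((2:ℝ)^n / 2 * Real.log 2) with hb
  have hab : ∀ n : ℕ, 1 ≤ n → a n ≤ b n := by
    intro n hn
    refine div_le_div₀ (by positivity) (hnum n) (by positivity) (hdenpos n hn)
  have ha0 : ∀ n : ℕ, 0 ≤ a n := by
    intro n
    apply div_nonneg (hnum0 n)
    rw [hden]; positivity
  have hbtend : Filter.Tendsto b Filter.atTop (nhds 0) := by
    have hb' : ∀ n : ℕ, b n =
        (Real.log (C:ℝ) * (1/2:ℝ)^n + (2 * Real.log d) * (n * (1/2:ℝ)^n)) * (2 / Real.log 2) := by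
      intro n
      have h2n : ((2:ℝ)^n) ≠ 0 := by positivity
      rw [hb, one_div, inv_pow]
      field_simp
    rw [show (0:ℝ) = (Real.log (C:ℝ) * 0 + (2 * Real.log d) * 0) * (2 / Real.log 2) by ring]
    refine Filter.Tendsto.congr (fun n => (hb' n).symm) ?_
    refine Filter.Tendsto.mul_const _ (Filter.Tendsto.add ?_ ?_)
    · exact (tendsto_pow_atTop_nhds_zero_of_lt_one (by norm_num) (by norm_num)).const_mul _
    · exact (tendsto_self_mul_const_pow_of_lt_one (by norm_num) (by norm_num)).const_mul _
  have hatend : Filter.Tendsto a Filter.atTop (nhds 0) := by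
    apply tendsto_of_tendsto_of_tendsto_of_le_of_le' tendsto_const_nhds hbtend
    · exact Filter.Eventually.of_forall ha0
    · exact Filter.eventually_atTop.2 ⟨1, hab⟩
  exact ⟨hatend.liminf_eq, hatend.limsup_eq⟩

end PartA

section Cheb
open Polynomial

variable {K : Type*} [Field K] [CharZero K] {A : Type*} [Field A] [Algebra K A]

lemma aeval_T_half' (t u y : A) (ht : 2 * t = 1) (huy : u * y = 1) (N : ℕ) :
    aeval (t * (u + y)) (Polynomial.Chebyshev.T K N)
      = t * (u ^ N + y ^ N) := by
  induction N using Nat.strong_induction_on with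
  | _ N ih =>
    match N, ih with
    | 0, _ => simp [Polynomial.Chebyshev.T_zero]; linear_combination -ht
    | 1, _ => simp [Polynomial.Chebyshev.T_one]
    | (n+2), ih =>
      have hT := Polynomial.Chebyshev.T_add_two K (n : ℤ)
      have hcast : ((n:ℤ) + 2) = ((n + 2 : ℕ) : ℤ) := by push_cast; ring
      rw [hcast] at hT
      rw [hT]
      have h1 := ih (n+1) (by omega)
      have h0 := ih n (by omega)
      push_cast at h1 h0 ⊢
      rw [map_sub, map_mul, map_mul, map_ofNat, Polynomial.aeval_X, h1, h0]
      linear_combination (t*(u+y)*(u^(n+1)+y^(n+1))) * ht + (t*(u^n+y^n)) * huy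

lemma aeval_dynCheb (u : A) (hu : u ≠ 0) (N : ℕ) :
    aeval (u + u⁻¹) (dynCheb K N) = u ^ N + (u ^ N)⁻¹ := by
  haveI : CharZero A := charZero_of_injective_algebraMap (algebraMap K A).injective
  have h2 : (2:A) ≠ 0 := two_ne_zero
  rw [dynCheb, map_mul, Polynomial.aeval_comp]
  rw [map_mul, Polynomial.aeval_X, Polynomial.aeval_C]
  have he : (algebraMap K A) 2⁻¹ = (2:A)⁻¹ := by
    rw [map_inv₀, map_ofNat]
  rw [he, aeval_T_half' 2⁻¹ u u⁻¹ (mul_inv_cancel₀ h2) (mul_inv_cancel₀ hu) N, map_ofNat, inv_pow]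
  field_simp

end Cheb

section Alg

variable {A : Type*} [Field A]

lemma exists_u [IsAlgClosed A] [CharZero A] (x : A) : ∃ u : A, u ≠ 0 ∧ x = u + u⁻¹ := by
  obtain ⟨r, hr⟩ := IsAlgClosed.exists_pow_nat_eq (x ^ 2 - 4) (n := 2) (by norm_num)
  refine ⟨(x + r) / 2, ?_, ?_⟩
  · intro h0
    have hprod : (x + r) / 2 * ((x - r) / 2) = 1 := by
      field_simp
      linear_combination -hr
    rw [h0, zero_mul] at hprod
    exact zero_ne_one hprod
  · have h0 : (x + r) / 2 ≠ 0 := by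
      intro h0
      have hprod : (x + r) / 2 * ((x - r) / 2) = 1 := by
        field_simp
        linear_combination -hr
      rw [h0, zero_mul] at hprod
      exact zero_ne_one hprod
    have hprod : (x + r) / 2 * ((x - r) / 2) = 1 := by
      field_simp
      linear_combination -hr
    have hinv : ((x + r) / 2)⁻¹ = (x - r) / 2 :=
      (eq_inv_of_mul_eq_one_right hprod).symm
    rw [hinv]
    ring

lemma eq_or_inv {v w : A} (hv : v ≠ 0) (hw : w ≠ 0) (h : v + v⁻¹ = w + w⁻¹) :
    v = w ∨ v = w⁻¹ := by
  have key : (v - w) * (v - w⁻¹) = 0 := by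
    have hvv : v * v⁻¹ = 1 := mul_inv_cancel₀ hv
    have hww : w * w⁻¹ = 1 := mul_inv_cancel₀ hw
    linear_combination v * h - hvv + hww
  rcases mul_eq_zero.1 key with h1 | h1
  · exact Or.inl (sub_eq_zero.1 h1)
  · exact Or.inr (sub_eq_zero.1 h1)

end Alg

section Iter

variable {K : Type*} [Field K] [CharZero K] {A : Type*} [Field A] [Algebra K A]

lemma iter_eval {d : ℕ} (hd : 2 ≤ d) (s : A) (hs : s = 1 ∨ s = -1) (Qf : A → A)
    (hQ : ∀ x : A, Qf x = s * Polynomial.aeval x (dynCheb K d)) (k : ℕ) (u : A) (hu : u ≠ 0) :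
    ∃ v : A, v ≠ 0 ∧ Qf^[k] (u + u⁻¹) = v + v⁻¹ ∧
      (v = u ^ d ^ k ∨ v = -(u ^ d ^ k)) := by
  induction k with
  | zero => exact ⟨u, hu, by simp, Or.inl (by simp)⟩
  | succ k ih =>
    obtain ⟨v, hv0, hvit, hvpm⟩ := ih
    have hvd0 : v ^ d ≠ 0 := pow_ne_zero _ hv0
    have hs0 : s ≠ 0 := by rcases hs with rfl | rfl <;> simp
    refine ⟨s * v ^ d, mul_ne_zero hs0 hvd0, ?_, ?_⟩
    · rw [Function.iterate_succ_apply', hvit, hQ, aeval_dynCheb v hv0 d]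
      rcases hs with rfl | rfl
      · simp
      · have hneg : (-1 * v ^ d : A)⁻¹ = -1 * (v ^ d)⁻¹ := by
          rw [neg_one_mul, neg_one_mul, inv_neg]
        rw [hneg]
        ring
    · have hpow : (u ^ d ^ k) ^ d = u ^ d ^ (k+1) := by
        rw [← pow_mul, ← pow_succ]
      rcases hs with rfl | rfl <;> rcases hvpm with rfl | rfl
      · left; rw [one_mul, hpow]
      · rcases Nat.even_or_odd d with hpar | hpar
        · left; rw [one_mul, hpar.neg_pow, hpow]
        · right; rw [one_mul, hpar.neg_pow, hpow]
      · right; rw [neg_one_mul, hpow]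
      · rcases Nat.even_or_odd d with hpar | hpar
        · right; rw [neg_one_mul, hpar.neg_pow, hpow]
        · left; rw [neg_one_mul, hpar.neg_pow, hpow, neg_neg]
  
end Iter

noncomputable section RatPoly
variable {K : Type*} [Field K] {A : Type*} [Field A] [Algebra K A]

lemma ratAct_poly_some (P : Polynomial K) (x : A) :
    ratAct P 1 A (some x) = some (Polynomial.aeval x P) := by
  simp [ratAct]

lemma ratAct_poly_none (P : Polynomial K) (hP : 0 < P.natDegree) :
    ratAct P 1 A none = none := by
  simp [ratAct, Polynomial.natDegree_one, hP]

lemma ratAct_poly_iter_some (P : Polynomial K) (k : ℕ) (x : A) :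
    (ratAct P 1 A)^[k] (some x) = some ((fun z => Polynomial.aeval z P)^[k] x) := by
  induction k generalizing x with
  | zero => rfl
  | succ k ih =>
      rw [Function.iterate_succ_apply, Function.iterate_succ_apply, ratAct_poly_some, ih]

lemma ratAct_poly_iter_none (P : Polynomial K) (hP : 0 < P.natDegree) (k : ℕ) :
    (ratAct P 1 A)^[k] (none : P1 A) = none := by
  induction k with
  | zero => rfl
  | succ k ih => rw [Function.iterate_succ_apply, ratAct_poly_none P hP, ih]

lemma ratAct_fiber_finite {d : ℕ} (hd : 2 ≤ d) (p q : Polynomial K) (hf : IsCoprime p q)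
    (hdeg : max p.natDegree q.natDegree = d) (y : P1 A) :
    {β : P1 A | ratAct p q A β = y}.Finite := by
  have hq0 : q ≠ 0 := by
    rintro rfl
    have : IsUnit p := isCoprime_zero_right.1 hf
    have h0 : p.natDegree = 0 := Polynomial.natDegree_eq_zero_of_isUnit this
    rw [h0] at hdeg
    simp at hdeg
    omega
  have hqb : q.map (algebraMap K A) ≠ 0 := Polynomial.map_ne_zero hq0
  cases y with
  | none =>
      apply Set.Finite.subset
        (Set.Finite.insert none ((Polynomial.finite_setOf_isRoot hqb).image some))
      rintro (_ | x) hβ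
      · exact Set.mem_insert _ _
      · refine Set.mem_insert_of_mem _ ⟨x, ?_, rfl⟩
        by_cases h : Polynomial.aeval x q = 0
        · show (q.map (algebraMap K A)).IsRoot x
          rw [Polynomial.IsRoot, Polynomial.eval_map, ← Polynomial.aeval_def]
          exact h
        · simp only [Set.mem_setOf_eq, ratAct, if_neg h] at hβ
          exact absurd hβ (by simp)
  | some cc =>
      set r := p.map (algebraMap K A) - Polynomial.C cc * q.map (algebraMap K A) with hr
      have hr0 : r ≠ 0 := by
        intro h0
        have hpb : p.map (algebraMap K A) = Polynomial.C cc * q.map (algebraMap K A) := by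
          rwa [hr, sub_eq_zero] at h0
        have hcop : IsCoprime (p.map (algebraMap K A)) (q.map (algebraMap K A)) :=
          hf.map (Polynomial.mapRingHom (algebraMap K A))
        obtain ⟨u, v, huv⟩ := hcop
        rw [hpb] at huv
        have : (u * Polynomial.C cc + v) * q.map (algebraMap K A) = 1 := by
          rw [← huv]; ring
        have hqu : IsUnit (q.map (algebraMap K A)) := IsUnit.of_mul_eq_one _
          (by rw [mul_comm] at this; exact this)
        have hqd : q.natDegree = 0 := by
          have := Polynomial.natDegree_eq_zero_of_isUnit hqu
          rwa [Polynomial.natDegree_map] at this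
        have hpd : p.natDegree = 0 := by
          have h1 : (p.map (algebraMap K A)).natDegree ≤ 0 := by
            rw [hpb]
            refine le_trans (Polynomial.natDegree_mul_le) ?_
            simp [Polynomial.natDegree_C, Polynomial.natDegree_map, hqd]
          rw [Polynomial.natDegree_map] at h1
          omega
        rw [hpd, hqd] at hdeg
        simp at hdeg
        omega
      apply Set.Finite.subset
        (Set.Finite.insert none ((Polynomial.finite_setOf_isRoot hr0).image some))
      rintro (_ | x) hβ
      · exact Set.mem_insert _ _
      · refine Set.mem_insert_of_mem _ ⟨x, ?_, rfl⟩
        by_cases h : Polynomial.aeval x q = 0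
        · simp only [Set.mem_setOf_eq, ratAct, if_pos h] at hβ
          exact absurd hβ (by simp)
        · simp only [Set.mem_setOf_eq, ratAct, if_neg h, Option.some.injEq] at hβ
          rw [div_eq_iff h] at hβ
          have hx : Polynomial.aeval x p = cc * Polynomial.aeval x q := hβ
          show r.IsRoot x
          rw [hr, Polynomial.IsRoot]
          simp only [Polynomial.eval_sub, Polynomial.eval_mul, Polynomial.eval_C,
            Polynomial.eval_map, ← Polynomial.aeval_def]
          rw [hx]
          ring

lemma iter_fiber_finite {d : ℕ} (hd : 2 ≤ d) (p q : Polynomial K) (hf : IsCoprime p q)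
    (hdeg : max p.natDegree q.natDegree = d) (k : ℕ) (y : P1 A) :
    {β : P1 A | (ratAct p q A)^[k] β = y}.Finite := by
  induction k generalizing y with
  | zero =>
      apply Set.Finite.subset (Set.finite_singleton y)
      intro β hβ
      simpa using hβ
  | succ k ih =>
      have hset : {β : P1 A | (ratAct p q A)^[k+1] β = y}
          = ⋃ z ∈ {β : P1 A | (ratAct p q A)^[k] β = y}, {β : P1 A | ratAct p q A β = z} := by
        ext β
        simp [Function.iterate_succ_apply]
      rw [hset]
      exact Set.Finite.biUnion (ih y) (fun z _ => ratAct_fiber_finite hd p q hf hdeg z)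

end RatPoly

section Moebius
variable {F : Type*} [Field F]

lemma moebius_none_inj {a b c e : F} (hdet : a * e - b * c ≠ 0) {β γ : P1 F}
    (hβ : moebius a b c e β = none) (hγ : moebius a b c e γ = none) : β = γ := by
  have he0 : c = 0 → e ≠ 0 := by
    intro hc h0
    apply hdet
    rw [hc, h0]; ring
  cases β with
  | none =>
      cases γ with
      | none => rfl
      | some z =>
          by_cases hc : c = 0
          · simp only [moebius, if_pos hc] at hβ
            simp only [moebius, hc, zero_mul, zero_add] at hγ
            rw [if_neg (he0 hc)] at hγ
            exact absurd hγ (by simp)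
          · simp only [moebius, if_neg hc] at hβ
            exact absurd hβ (by simp)
  | some z =>
      cases γ with
      | none =>
          by_cases hc : c = 0
          · simp only [moebius, if_pos hc] at hγ
            simp only [moebius, hc, zero_mul, zero_add] at hβ
            rw [if_neg (he0 hc)] at hβ
            exact absurd hβ (by simp)
          · simp only [moebius, if_neg hc] at hγ
            exact absurd hγ (by simp)
      | some z' =>
          by_cases hc : c = 0
          · simp only [moebius, hc, zero_mul, zero_add] at hβ
            rw [if_neg (he0 hc)] at hβ
            exact absurd hβ (by simp)
          · have h1 : c * z + e = 0 := by
              by_contra h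
              simp only [moebius, if_neg h] at hβ
              exact absurd hβ (by simp)
            have h2 : c * z' + e = 0 := by
              by_contra h
              simp only [moebius, if_neg h] at hγ
              exact absurd hγ (by simp)
            have : c * z = c * z' := by linear_combination h1 - h2
            rw [mul_left_cancel₀ hc this]

lemma moebius_some_mem {K : Type*} [Field K] {a b c e x : Kbar K} (hdet : a * e - b * c ≠ 0)
    (E : IntermediateField K (Kbar K)) (haE : a ∈ E) (hbE : b ∈ E) (hcE : c ∈ E) (heE : e ∈ E)
    (hxE : x ∈ E) {β : P1 (Kbar K)} (hβ : moebius a b c e β = some x) :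
    β = none ∨ ∃ y, y ∈ E ∧ β = some y := by
  cases β with
  | none => exact Or.inl rfl
  | some y =>
      right
      refine ⟨y, ?_, rfl⟩
      have hden : c * y + e ≠ 0 := by
        intro h
        simp only [moebius, if_pos h] at hβ
        exact absurd hβ (by simp)
      simp only [moebius, if_neg hden, Option.some.injEq] at hβ
      rw [div_eq_iff hden] at hβ
      have hx : a * y + b = x * (c * y + e) := hβ
      have hac : a - x * c ≠ 0 := by
        intro h0
        have ha' : a = x * c := by linear_combination h0
        have hxb : b = x * e := by
          rw [ha'] at hx
          linear_combination hx
        exact hdet (by rw [ha', hxb]; ring)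
      have hy : y = (x * e - b) / (a - x * c) := by
        rw [eq_div_iff hac]
        linear_combination hx
      rw [hy]
      exact IntermediateField.div_mem _ (IntermediateField.sub_mem _
        (IntermediateField.mul_mem _ hxE heE) hbE)
        (IntermediateField.sub_mem _ haE (IntermediateField.mul_mem _ hxE hcE))

end Moebius

section Agree
variable {K : Type*} [Field K] {L : Type*} [Field L] [Algebra K L]

lemma algEquiv_agree_on_adjoin (σ τ : L ≃ₐ[K] L) (S : Set L)
    (h : ∀ x ∈ S, σ x = τ x) : ∀ y ∈ IntermediateField.adjoin K S, σ y = τ y := by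
  intro y hy
  induction hy using IntermediateField.adjoin_induction with
  | mem x hx => exact h x hx
  | algebraMap r => rw [AlgEquiv.commutes, AlgEquiv.commutes]
  | add x y _ _ hx hy => rw [map_add, map_add, hx, hy]
  | inv x _ hx => rw [map_inv₀, map_inv₀, hx]
  | mul x y _ _ hx hy => rw [map_mul, map_mul, hx, hy]

end Agree

noncomputable section Main

open Polynomial IntermediateField

variable {K : Type*} [Field K] [NumberField K]

lemma main_cover_bound {d : ℕ} (hd : 2 ≤ d) (p q : Polynomial K) (hf : IsCoprime p q)
    (hdeg : max p.natDegree q.natDegree = d) (α : P1 K) (a b c e : Kbar K)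
    (hdet : a * e - b * c ≠ 0) (P₀ : Polynomial K) (s : Kbar K) (hs : s = 1 ∨ s = -1)
    (hP₀e : ∀ x : Kbar K, Polynomial.aeval x P₀ = s * Polynomial.aeval x (dynCheb K d))
    (hconj : ∀ x : P1 (Kbar K), moebius a b c e (ratAct p q (Kbar K) x)
      = ratAct P₀ 1 (Kbar K) (moebius a b c e x)) :
    ∃ C : ℕ, 1 ≤ C ∧ ∀ n, coverNum d (arbGal (K := K) galP1 ⊥ (ratAct p q (Kbar K)) (P1K α)) n
      ≤ C * d ^ n * d ^ n := by
  classical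
  set F := ratAct p q (Kbar K) with hF
  set M := moebius a b c e with hM
  set G := arbGal (K := K) galP1 ⊥ F (P1K α) with hG
  haveI instF : ∀ k, Finite (preV F (P1K α) k) := fun k =>
    (iter_fiber_finite hd p q hf hdeg k (P1K α)).to_subtype
  have hs0 : s ≠ 0 := by rcases hs with rfl | rfl <;> simp
  -- `P₀` has positive degree
  have hP₀pos : 0 < P₀.natDegree := by
    by_contra hcon
    push_neg at hcon
    have hc₀ : P₀ = Polynomial.C (P₀.coeff 0) :=
      Polynomial.eq_C_of_natDegree_eq_zero (Nat.le_zero.1 hcon)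
    obtain ⟨z, hz⟩ := IsAlgClosed.exists_pow_nat_eq (2 : Kbar K) (n := d) (by omega)
    have hz0 : z ≠ 0 := by
      intro h0
      rw [h0, zero_pow (by omega : d ≠ 0)] at hz
      exact two_ne_zero hz.symm
    have h1 := hP₀e ((1 : Kbar K) + 1⁻¹)
    have h2 := hP₀e (z + z⁻¹)
    rw [aeval_dynCheb (1 : Kbar K) one_ne_zero d] at h1
    rw [aeval_dynCheb z hz0 d] at h2
    rw [hc₀, Polynomial.aeval_C] at h1 h2
    rw [hz] at h2
    rw [one_pow, inv_one] at h1
    have h3 : s * (1 + 1) = s * (2 + (2 : Kbar K)⁻¹) := h1.symm.trans h2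
    have h4 : s * (2 : Kbar K)⁻¹ = 0 := by linear_combination -h3
    rcases mul_eq_zero.1 h4 with h5 | h5
    · exact hs0 h5
    · exact inv_ne_zero (two_ne_zero) h5
  have hTm_none : ∀ k : ℕ, (ratAct P₀ 1 (Kbar K))^[k] (none : P1 (Kbar K)) = none :=
    ratAct_poly_iter_none P₀ hP₀pos
  have hiter : ∀ (k : ℕ) (x : P1 (Kbar K)),
      M (F^[k] x) = (ratAct P₀ 1 (Kbar K))^[k] (M x) := by
    intro k
    induction k with
    | zero => intro x; rfl
    | succ k ih =>
        intro x
        rw [Function.iterate_succ_apply', Function.iterate_succ_apply', hconj, ih]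
  cases hMα : M (P1K α) with
  | none =>
      refine ⟨1, le_refl 1, fun n => ?_⟩
      have hMnone : ∀ (k : ℕ) (β : preV F (P1K α) k), M (β : P1 (Kbar K)) = none := by
        intro k β
        have h1 := hiter k (β : P1 (Kbar K))
        rw [β.2, hMα] at h1
        cases hMb : M (β : P1 (Kbar K)) with
        | none => rfl
        | some x =>
            rw [hMb, ratAct_poly_iter_some] at h1
            exact absurd h1 (by simp)
      have hsub : ∀ (k : ℕ) (β γ : preV F (P1K α) k), β = γ := fun k β γ =>
        Subtype.ext (moebius_none_inj hdet (hMnone k β) (hMnone k γ))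
      have hcard1 : ((Set.toFinite (resMap (V := preV F (P1K α)) n '' G)).toFinset).card ≤ 1 := by
        refine Finset.card_le_one.2 ?_
        intro t₁ h₁ t₂ h₂
        rw [Set.Finite.mem_toFinset] at h₁ h₂
        obtain ⟨g₁, -, rfl⟩ := h₁
        obtain ⟨g₂, -, rfl⟩ := h₂
        funext k
        exact Equiv.ext (fun β => hsub k.1 _ _)
      have hdn : 1 ≤ d ^ n := Nat.one_le_pow _ _ (by omega)
      calc coverNum d G n ≤ _ := coverNum_le_card G n
        _ ≤ 1 := hcard1
        _ ≤ 1 * d ^ n * d ^ n := by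
            simpa using Nat.mul_le_mul hdn hdn
  | some c0 =>
      obtain ⟨w, hw0, hwc⟩ := exists_u (A := Kbar K) c0
      have hInt : ∀ z : Kbar K, IsIntegral K z := fun z =>
        (Algebra.IsAlgebraic.isAlgebraic z).isIntegral
      set Da := (minpoly K a).natDegree with hDa'
      set Db := (minpoly K b).natDegree with hDb'
      set Dc := (minpoly K c).natDegree with hDc'
      set De := (minpoly K e).natDegree with hDe'
      set Dw := (minpoly K w).natDegree with hDw'
      have hDa : 1 ≤ Da := minpoly.natDegree_pos (hInt a)
      have hDb : 1 ≤ Db := minpoly.natDegree_pos (hInt b)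
      have hDc : 1 ≤ Dc := minpoly.natDegree_pos (hInt c)
      have hDe : 1 ≤ De := minpoly.natDegree_pos (hInt e)
      have hDw : 1 ≤ Dw := minpoly.natDegree_pos (hInt w)
      refine ⟨Da * Db * Dc * De * Dw * 2, ?_, fun n => ?_⟩
      · calc (1:ℕ) = 1*1*1*1*1*1 := by norm_num
          _ ≤ Da * Db * Dc * De * Dw * 2 := by gcongr <;> omega
      -- per-level data
      have hdn : 0 < d ^ n := pow_pos (by omega) n
      obtain ⟨η, hη⟩ := IsAlgClosed.exists_pow_nat_eq w (n := d ^ n) hdn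
      have hη0 : η ≠ 0 := by
        intro h0
        rw [h0, zero_pow (by omega : d ^ n ≠ 0)] at hη
        exact hw0 hη.symm
      have hm : 0 < 2 * d ^ n := by omega
      haveI : NeZero (2 * d ^ n) := ⟨by omega⟩
      obtain ⟨ζ, hζ⟩ := IsCyclotomicExtension.exists_isPrimitiveRoot (Kbar K)
        (S := {2 * d ^ n}) (Kbar K) rfl (by omega)
      have hζ' : IsPrimitiveRoot ζ (2 * d ^ n) := hζ
      set E := IntermediateField.adjoin K ({a, b, c, e, η, ζ} : Set (Kbar K)) with hE
      have haE : a ∈ E := subset_adjoin K _ (by simp)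
      have hbE : b ∈ E := subset_adjoin K _ (by simp)
      have hcE : c ∈ E := subset_adjoin K _ (by simp)
      have heE : e ∈ E := subset_adjoin K _ (by simp)
      have hηE : η ∈ E := subset_adjoin K _ (by simp)
      have hζE : ζ ∈ E := subset_adjoin K _ (by simp)
      -- every point of the tree up to level n is `E`-rational
      have hpt : ∀ k : ℕ, k ≤ n → ∀ β : P1 (Kbar K), F^[k] β = P1K α →
          β = none ∨ ∃ y, y ∈ E ∧ β = some y := by
        intro k hk β hβ
        have h1 := hiter k β
        rw [hβ, hMα] at h1
        cases hMb : M β with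
        | none =>
            rw [hMb, hTm_none k] at h1
            exact absurd h1 (by simp)
        | some x =>
        rw [hMb, ratAct_poly_iter_some] at h1
        have hQc : (fun z : Kbar K => Polynomial.aeval z P₀)^[k] x = c0 :=
          (Option.some_injective _ h1).symm
        obtain ⟨u, hu0, hux⟩ := exists_u (A := Kbar K) x
        obtain ⟨v, hv0, hvit, hvpm⟩ :=
          iter_eval (K := K) hd s hs (fun z : Kbar K => Polynomial.aeval z P₀) hP₀e k u hu0
        rw [← hux] at hvit
        have hvw : v + v⁻¹ = w + w⁻¹ := by rw [← hvit, hQc, hwc]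
        have hvor := eq_or_inv hv0 hw0 hvw
        have hupow : u ^ d ^ k = w ∨ u ^ d ^ k = -w ∨ u ^ d ^ k = w⁻¹ ∨ u ^ d ^ k = -w⁻¹ := by
          rcases hvor with h' | h' <;> rcases hvpm with h'' | h''
          · exact Or.inl (by rw [← h'', h'])
          · refine Or.inr (Or.inl ?_)
            rw [h'] at h''
            linear_combination h''
          · exact Or.inr (Or.inr (Or.inl (by rw [← h'', h'])))
          · refine Or.inr (Or.inr (Or.inr ?_))
            rw [h'] at h''
            linear_combination h''
        set h := η ^ d ^ (n - k) with hh
        have hddk : d ^ (n - k) * d ^ k = d ^ n := by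
          rw [← pow_add]
          congr 1
          omega
        have hhk : h ^ d ^ k = w := by
          rw [hh, ← pow_mul, hddk, hη]
        have hh0 : h ≠ 0 := pow_ne_zero _ hη0
        have hdd : d ^ k * (2 * d ^ (n - k)) = 2 * d ^ n := by
          calc d ^ k * (2 * d ^ (n - k)) = 2 * (d ^ (n-k) * d ^ k) := by ring
            _ = 2 * d ^ n := by rw [hddk]
        have hpow_eq : ∀ t : Kbar K, t ^ (2 * d ^ n) = ((t ^ d ^ k) ^ 2) ^ d ^ (n - k) := by
          intro t
          have h2 : 2 * d ^ n = d ^ k * 2 * d ^ (n - k) := by rw [← hdd]; ring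
          rw [h2, pow_mul, pow_mul]
        have hex_t : ∃ t : Kbar K, t ^ (2 * d ^ n) = 1 ∧ (u = t * h ∨ u = t * h⁻¹) := by
          rcases hupow with h' | h' | h' | h'
          · refine ⟨u * h⁻¹, ?_, Or.inl (by field_simp)⟩
            have hp : (u * h⁻¹) ^ d ^ k = 1 := by
              rw [mul_pow, inv_pow, h', hhk, mul_inv_cancel₀ hw0]
            rw [hpow_eq, hp, one_pow, one_pow]
          · refine ⟨u * h⁻¹, ?_, Or.inl (by field_simp)⟩
            have hp : (u * h⁻¹) ^ d ^ k = -1 := by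
              rw [mul_pow, inv_pow, h', hhk, neg_mul, mul_inv_cancel₀ hw0]
            rw [hpow_eq, hp, neg_one_sq, one_pow]
          · refine ⟨u * h, ?_, Or.inr (by field_simp)⟩
            have hp : (u * h) ^ d ^ k = 1 := by
              rw [mul_pow, h', hhk, inv_mul_cancel₀ hw0]
            rw [hpow_eq, hp, one_pow, one_pow]
          · refine ⟨u * h, ?_, Or.inr (by field_simp)⟩
            have hp : (u * h) ^ d ^ k = -1 := by
              rw [mul_pow, h', hhk, neg_mul, inv_mul_cancel₀ hw0]
            rw [hpow_eq, hp, neg_one_sq, one_pow]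
        obtain ⟨t, ht1, htu⟩ := hex_t
        obtain ⟨i, -, hi⟩ := hζ'.eq_pow_of_pow_eq_one ht1
        have htE : t ∈ E := by rw [← hi]; exact pow_mem hζE i
        have hhE : h ∈ E := pow_mem hηE _
        have huE : u ∈ E := by
          rcases htu with rfl | rfl
          · exact mul_mem htE hhE
          · exact mul_mem htE (inv_mem hhE)
        have hxE : x ∈ E := by rw [hux]; exact add_mem huE (inv_mem huE)
        exact moebius_some_mem hdet E haE hbE hcE heE hxE hMb
      -- root finsets
      set φ := algebraMap K (Kbar K) with hφ
      set RS : Polynomial K → Finset (Kbar K) := fun P => (P.map φ).roots.toFinset with hRS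
      have hRSmem : ∀ (P : Polynomial K) (z : Kbar K), P ≠ 0 → Polynomial.aeval z P = 0 →
          z ∈ RS P := by
        intro P z hP hz
        rw [hRS]
        simp only [Multiset.mem_toFinset]
        rw [Polynomial.mem_roots (Polynomial.map_ne_zero hP), Polynomial.IsRoot,
          Polynomial.eval_map, ← Polynomial.aeval_def]
        exact hz
      have hRScard : ∀ P : Polynomial K, (RS P).card ≤ P.natDegree := by
        intro P
        calc (RS P).card ≤ Multiset.card (P.map φ).roots := Multiset.toFinset_card_le _
          _ ≤ (P.map φ).natDegree := Polynomial.card_roots' _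
          _ = P.natDegree := Polynomial.natDegree_map φ
      set Pη : Polynomial K := (minpoly K w).comp (Polynomial.X ^ d ^ n) with hPη
      have hPη0 : Pη ≠ 0 := by
        rw [← Polynomial.leadingCoeff_ne_zero, hPη,
          Polynomial.leadingCoeff_comp (by rw [Polynomial.natDegree_X_pow]; omega)]
        simp [(minpoly.monic (hInt w)).leadingCoeff]
      have hPηdeg : Pη.natDegree = Dw * d ^ n := by
        rw [hPη, Polynomial.natDegree_comp, Polynomial.natDegree_X_pow, hDw']
      have hPηroot : Polynomial.aeval η Pη = 0 := by
        rw [hPη, Polynomial.aeval_comp]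
        simp only [map_pow, Polynomial.aeval_X]
        rw [hη]
        exact minpoly.aeval K w
      set Pζ : Polynomial K := Polynomial.X ^ (2 * d ^ n) - 1 with hPζ
      have hPζ0 : Pζ ≠ 0 := by
        have h1 := Polynomial.X_pow_sub_C_ne_zero hm (1 : K)
        rwa [Polynomial.C_1] at h1
      have hPζdeg : Pζ.natDegree = 2 * d ^ n := by
        have h1 := Polynomial.natDegree_X_pow_sub_C (n := 2 * d ^ n) (r := (1 : K))
        rwa [Polynomial.C_1] at h1
      have hPζroot : Polynomial.aeval ζ Pζ = 0 := by
        rw [hPζ]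
        simp only [map_sub, map_pow, Polynomial.aeval_X, map_one]
        rw [hζ'.pow_eq_one, sub_self]
      -- choice of Galois witnesses
      set Im := resMap (V := preV F (P1K α)) n '' G with hIm
      have hex : ∀ t : (∀ k : Fin (n+1), Equiv.Perm (preV F (P1K α) k.1)),
          ∃ σ : Kbar K ≃ₐ[K] Kbar K, t ∈ Im →
          ∀ (k : Fin (n+1)) (β : preV F (P1K α) k.1),
            ((t k β : P1 (Kbar K))) = galP1 σ (β : P1 (Kbar K)) := by
        intro t
        by_cases ht : t ∈ Im
        · obtain ⟨g, hgG, rfl⟩ := ht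
          obtain ⟨σ, -, hσ⟩ := hgG
          exact ⟨σ, fun _ k β => hσ k.1 β⟩
        · exact ⟨AlgEquiv.refl, fun h' => absurd h' ht⟩
      choose pickσ hpickσ using hex
      have hroot_map : ∀ (σ : Kbar K ≃ₐ[K] Kbar K) (P : Polynomial K) (z : Kbar K),
          Polynomial.aeval z P = 0 → Polynomial.aeval (σ z) P = 0 := by
        intro σ P z hz
        rw [Polynomial.aeval_algHom_apply σ z P, hz, map_zero]
      -- the injection into a product of root sets
      have hcount : ((Set.toFinite Im).toFinset).card ≤
          (RS (minpoly K a) ×ˢ (RS (minpoly K b) ×ˢ (RS (minpoly K c) ×ˢ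
            (RS (minpoly K e) ×ˢ (RS Pη ×ˢ RS Pζ))))).card := by
        refine Finset.card_le_card_of_injOn
          (fun t => (pickσ t a, pickσ t b, pickσ t c, pickσ t e, pickσ t η, pickσ t ζ)) ?_ ?_
        · intro t ht
          rw [Finset.mem_coe, Set.Finite.mem_toFinset] at ht
          simp only [Finset.mem_coe, Finset.mem_product]
          refine ⟨?_, ?_, ?_, ?_, ?_, ?_⟩
          · exact hRSmem _ _ (minpoly.ne_zero (hInt a)) (hroot_map _ _ _ (minpoly.aeval K a))
          · exact hRSmem _ _ (minpoly.ne_zero (hInt b)) (hroot_map _ _ _ (minpoly.aeval K b))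
          · exact hRSmem _ _ (minpoly.ne_zero (hInt c)) (hroot_map _ _ _ (minpoly.aeval K c))
          · exact hRSmem _ _ (minpoly.ne_zero (hInt e)) (hroot_map _ _ _ (minpoly.aeval K e))
          · exact hRSmem _ _ hPη0 (hroot_map _ _ _ hPηroot)
          · exact hRSmem _ _ hPζ0 (hroot_map _ _ _ hPζroot)
        · intro t₁ h₁ t₂ h₂ heq
          rw [Finset.mem_coe, Set.Finite.mem_toFinset] at h₁ h₂
          simp only [Prod.mk.injEq] at heq
          obtain ⟨ea, eb, ec, ee, eη, eζ⟩ := heq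
          have hagree : ∀ x ∈ ({a, b, c, e, η, ζ} : Set (Kbar K)),
              pickσ t₁ x = pickσ t₂ x := by
            intro x hx
            simp only [Set.mem_insert_iff, Set.mem_singleton_iff] at hx
            rcases hx with rfl | rfl | rfl | rfl | rfl | rfl <;> assumption
          have hEagree := algEquiv_agree_on_adjoin (pickσ t₁) (pickσ t₂) _ hagree
          funext k
          refine Equiv.ext (fun β => Subtype.ext ?_)
          rw [hpickσ t₁ h₁ k β, hpickσ t₂ h₂ k β]
          rcases hpt k.1 (Nat.lt_succ_iff.1 k.2) (β : P1 (Kbar K)) β.2 with hb0 | ⟨y, hyE, hb0⟩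
          · rw [hb0]; rfl
          · rw [hb0]
            show Option.map _ (some y) = Option.map _ (some y)
            simp only [Option.map_some]
            rw [hEagree y hyE]
      -- final counting
      calc coverNum d G n ≤ _ := coverNum_le_card G n
        _ ≤ _ := hcount
        _ = (RS (minpoly K a)).card * ((RS (minpoly K b)).card * ((RS (minpoly K c)).card *
            ((RS (minpoly K e)).card * ((RS Pη).card * (RS Pζ).card)))) := by
            simp [Finset.card_product]
        _ ≤ Da * (Db * (Dc * (De * ((Dw * d ^ n) * (2 * d ^ n))))) := by
            refine Nat.mul_le_mul (hRScard _) ?_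
            refine Nat.mul_le_mul (hRScard _) ?_
            refine Nat.mul_le_mul (hRScard _) ?_
            refine Nat.mul_le_mul (hRScard _) ?_
            refine Nat.mul_le_mul ?_ ?_
            · rw [← hPηdeg]; exact hRScard _
            · rw [← hPζdeg]; exact hRScard _
        _ = Da * Db * Dc * De * Dw * 2 * d ^ n * d ^ n := by ring

end Main

theorem arboreal_chebyshev_maps_small {K : Type*} [Field K] [NumberField K] {d : ℕ}
    (hd : 2 ≤ d) (p q : Polynomial K) (hf : IsCoprime p q)
    (hdeg : max p.natDegree q.natDegree = d) (α : P1 K)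
    (hcheb : ∃ a b c e : Kbar K, a * e - b * c ≠ 0 ∧
      ((∀ x : P1 (Kbar K), moebius a b c e (ratAct p q (Kbar K) x) =
          ratAct (dynCheb K d) 1 (Kbar K) (moebius a b c e x)) ∨
        (∀ x : P1 (Kbar K), moebius a b c e (ratAct p q (Kbar K) x) =
          ratAct (-dynCheb K d) 1 (Kbar K) (moebius a b c e x)))) :
    HasDim d (arbGal (K := K) galP1 ⊥ (ratAct p q (Kbar K)) (P1K α)) 0 := by
  classical
  obtain ⟨a, b, c, e, hdet, hconj⟩ := hcheb
  haveI instF : ∀ k, Finite (preV (ratAct p q (Kbar K)) (P1K α) k) := fun k =>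
    (iter_fiber_finite hd p q hf hdeg k (P1K α)).to_subtype
  have hGne : (arbGal (K := K) galP1 ⊥ (ratAct p q (Kbar K)) (P1K α)).Nonempty := by
    refine ⟨fun n => Equiv.refl _, AlgEquiv.refl, fun x _ => rfl, fun n β => ?_⟩
    simp [galP1]
  have hbound : ∃ C : ℕ, 1 ≤ C ∧ ∀ n,
      coverNum d (arbGal (K := K) galP1 ⊥ (ratAct p q (Kbar K)) (P1K α)) n
        ≤ C * d ^ n * d ^ n := by
    rcases hconj with h | h
    · exact main_cover_bound hd p q hf hdeg α a b c e hdet (dynCheb K d) 1 (Or.inl rfl)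
        (fun x => by rw [one_mul]) h
    · exact main_cover_bound hd p q hf hdeg α a b c e hdet (-dynCheb K d) (-1) (Or.inr rfl)
        (fun x => by rw [map_neg, neg_one_mul]) h
  obtain ⟨C, hC, hcov⟩ := hbound
  exact hasDim_zero_of_cover_poly hd hGne C hC hcov
end

section
/- Let K be a number field, let f, g : P^1 → P^1 be rational maps of degrees ≥ 2 defined over K, and let α ∈ P^1(K). Suppose that both Minkowski dimensions dim(G_{f,α}) and dim(G_{g,α}) exist, and that f and g share an iterate, i.e. f^m = g^n for some integers m ≥ 1 and n ≥ 1. Then dim(G_{f,α}) = 0 if and only if dim(G_{g,α}) = 0. -/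
open scoped Classical

noncomputable section

section Comb
variable {V : ℕ → Type*} {d : ℕ}

lemma treeScale_pos (d n : ℕ) : 0 < treeScale d n := by
  have h : (0:ℝ) < (d.factorial : ℝ) := by exact_mod_cast d.factorial_pos
  unfold treeScale; positivity

lemma one_lt_fact {d : ℕ} (hd : 2 ≤ d) : (1:ℝ) < (d.factorial : ℝ) := by
  exact_mod_cast Nat.one_lt_factorial.mpr (by omega)

lemma scaleExp_succ (d n : ℕ) : scaleExp d (n+1) = scaleExp d n + d ^ n :=
  Finset.sum_range_succ _ _

lemma scaleExp_strictMono (hd : 2 ≤ d) : StrictMono (scaleExp d) := by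
  apply strictMono_nat_of_lt_succ
  intro n
  have h : 0 < d ^ n := pow_pos (by omega) n
  rw [scaleExp_succ]; omega

lemma treeScale_strictAnti (hd : 2 ≤ d) : StrictAnti (treeScale d) := by
  intro a b hab
  unfold treeScale
  have h1 : (1:ℝ) < (d.factorial : ℝ) := one_lt_fact hd
  have h2 : ((d.factorial : ℝ)) ^ scaleExp d a < (d.factorial : ℝ) ^ scaleExp d b :=
    pow_lt_pow_right₀ h1 (scaleExp_strictMono hd hab)
  exact inv_strictAnti₀ (by positivity) h2

lemma agreeUpTo_zero (h0 : ∀ a b : Equiv.Perm (V 0), a = b)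
    (σ τ : ∀ k, Equiv.Perm (V k)) : AgreeUpTo 0 σ τ := by
  intro k hk
  obtain rfl : k = 0 := Nat.le_zero.mp hk
  exact h0 _ _

lemma treeDist_le_iff (hd : 2 ≤ d) (h0 : ∀ a b : Equiv.Perm (V 0), a = b)
    (σ τ : ∀ k, Equiv.Perm (V k)) (n : ℕ) :
    treeDist d σ τ ≤ treeScale d n ↔ AgreeUpTo n σ τ := by
  have hbdd : BddBelow {x : ℝ | ∃ k : ℕ, AgreeUpTo k σ τ ∧ x = treeScale d k} :=
    ⟨0, by rintro x ⟨k, -, rfl⟩; exact (treeScale_pos d k).le⟩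
  have hne : treeScale d 0 ∈ {x : ℝ | ∃ k : ℕ, AgreeUpTo k σ τ ∧ x = treeScale d k} :=
    ⟨0, agreeUpTo_zero h0 σ τ, rfl⟩
  constructor
  · intro h
    by_contra hA
    rcases Nat.eq_zero_or_pos n with rfl | hn
    · exact hA (agreeUpTo_zero h0 σ τ)
    · have hlb : treeScale d (n-1) ≤ treeDist d σ τ := by
        apply le_csInf ⟨_, hne⟩
        rintro x ⟨k, hk, rfl⟩
        have hkn : k ≤ n - 1 := by
          by_contra hk2
          exact hA (fun j hj => hk j (le_trans hj (by omega)))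
        exact (treeScale_strictAnti hd).antitone hkn
      have hlt : treeScale d n < treeScale d (n-1) :=
        treeScale_strictAnti hd (by omega : n - 1 < n)
      exact absurd (hlb.trans h) (not_le.mpr hlt)
  · intro h
    exact csInf_le hbdd ⟨n, h, rfl⟩

def restrict (n : ℕ) (σ : ∀ k, Equiv.Perm (V k)) : ∀ k : Fin (n+1), Equiv.Perm (V k.1) :=
  fun k => σ k.1

lemma agreeUpTo_iff_restrict (n : ℕ) (σ τ : ∀ k, Equiv.Perm (V k)) :
    AgreeUpTo n σ τ ↔ restrict n σ = restrict n τ := by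
  constructor
  · intro h; funext k; exact h k.1 (by omega)
  · intro h k hk; exact congrFun h ⟨k, by omega⟩

lemma coverNum_eq_levelCard (hd : 2 ≤ d) (h0 : ∀ a b : Equiv.Perm (V 0), a = b)
    (G : Set (∀ k, Equiv.Perm (V k))) (n : ℕ) :
    coverNum d G n = levelCard G n := by
  classical
  have hball : ∀ σ : ∀ k, Equiv.Perm (V k),
      {τ | treeDist d σ τ ≤ treeScale d n} = {τ | restrict n σ = restrict n τ} := by
    intro σ; ext τ
    simp only [Set.mem_setOf_eq, treeDist_le_iff hd h0, agreeUpTo_iff_restrict]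
  have hlc : levelCard G n = (restrict n '' G).ncard := by
    rw [levelCard, ← Nat.card_coe_set_eq]; rfl
  -- key: any covering finset yields that the restriction image is covered by restrictions of s
  have hcov : ∀ s : Finset (∀ k, Equiv.Perm (V k)),
      G ⊆ (⋃ σ ∈ s, {τ | treeDist d σ τ ≤ treeScale d n}) →
      restrict n '' G ⊆ restrict n '' (s : Set (∀ k, Equiv.Perm (V k))) := by
    rintro s hs v ⟨τ, hτ, rfl⟩
    obtain ⟨σ, hσs, hστ⟩ := by simpa using hs hτ
    exact ⟨σ, hσs, ((agreeUpTo_iff_restrict n σ τ).mp ((treeDist_le_iff hd h0 σ τ n).mp hστ))⟩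
  by_cases hfin : (restrict n '' G).Finite
  · -- choose a section
    have hsec : ∀ v, v ∈ restrict n '' G → ∃ σ, σ ∈ G ∧ restrict n σ = v := by
      rintro v ⟨σ, hσ, rfl⟩; exact ⟨σ, hσ, rfl⟩
    choose sec hsecG hsecr using hsec
    set s : Finset (∀ k, Equiv.Perm (V k)) :=
      hfin.toFinset.attach.image (fun v => sec v.1 (hfin.mem_toFinset.mp v.2)) with hs_def
    have hinj : Set.InjOn (fun v : {x // x ∈ hfin.toFinset} => sec v.1 (hfin.mem_toFinset.mp v.2))
        hfin.toFinset.attach := by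
      intro a _ b _ hab
      replace hab := congrArg (restrict n) hab
      simp only [hsecr] at hab
      exact Subtype.ext hab
    have hscard : s.card = (restrict n '' G).ncard := by
      rw [hs_def, Finset.card_image_of_injOn hinj, Finset.card_attach,
        Set.ncard_eq_toFinset_card _ hfin]
    have hmem : (restrict n '' G).ncard ∈ {m : ℕ | ∃ s : Finset (∀ k, Equiv.Perm (V k)),
        s.card = m ∧ G ⊆ ⋃ σ ∈ s, {τ | treeDist d σ τ ≤ treeScale d n}} := by
      refine ⟨s, hscard, ?_⟩
      intro τ hτ
      have hv : restrict n τ ∈ restrict n '' G := ⟨τ, hτ, rfl⟩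
      have hvs : sec _ hv ∈ s := by
        rw [hs_def]
        exact Finset.mem_image.mpr ⟨⟨restrict n τ, hfin.mem_toFinset.mpr hv⟩, Finset.mem_attach _ _, rfl⟩
      refine Set.mem_biUnion hvs ?_
      exact (treeDist_le_iff hd h0 _ τ n).mpr ((agreeUpTo_iff_restrict n _ τ).mpr (hsecr _ hv))
    refine le_antisymm (Nat.sInf_le (by rw [hlc]; exact hmem)) ?_
    rw [hlc]
    apply le_csInf ⟨_, hmem⟩
    rintro m ⟨s, rfl, hs⟩
    have h1 : (restrict n '' G).ncard ≤ (restrict n '' (s : Set ((k : ℕ) → Equiv.Perm (V k)))).ncard :=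
      Set.ncard_le_ncard (hcov s hs) (s.finite_toSet.image _)
    have h2 : (restrict n '' (s : Set ((k : ℕ) → Equiv.Perm (V k)))).ncard
        ≤ (s : Set ((k : ℕ) → Equiv.Perm (V k))).ncard := Set.ncard_image_le s.finite_toSet
    have h3 : (s : Set ((k : ℕ) → Equiv.Perm (V k))).ncard = s.card := Set.ncard_coe_finset s
    omega
  · -- infinite image: no finite cover, both sides are 0
    have h1 : levelCard G n = 0 := by
      rw [hlc, Set.Infinite.ncard hfin]
    have h2 : {m : ℕ | ∃ s : Finset (∀ k, Equiv.Perm (V k)), s.card = m ∧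
        G ⊆ ⋃ σ ∈ s, {τ | treeDist d σ τ ≤ treeScale d n}} = ∅ := by
      rw [Set.eq_empty_iff_forall_notMem]
      rintro m ⟨s, rfl, hs⟩
      exact hfin (Set.Finite.subset (s.finite_toSet.image _) (hcov s hs))
    rw [coverNum, h2, Nat.sInf_empty, h1]


end Comb

section Seq

lemma log_one_div_treeScale (d N : ℕ) :
    Real.log (1 / treeScale d N) = (scaleExp d N : ℝ) * Real.log (d.factorial : ℝ) := by
  rw [one_div, treeScale, inv_inv, Real.log_pow]

def dimSeq (d : ℕ) (A : ℕ → ℕ) (N : ℕ) : ℝ :=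
  Real.log (A N) / Real.log (1 / treeScale d N)

lemma dimSeq_nonneg (d : ℕ) (A : ℕ → ℕ) (N : ℕ) : 0 ≤ dimSeq d A N := by
  have h1 : (1:ℝ) ≤ (d.factorial : ℝ) := by exact_mod_cast d.factorial_pos
  apply div_nonneg
  · rcases Nat.eq_zero_or_pos (A N) with h | h
    · simp [h]
    · exact Real.log_natCast_nonneg _
  · rw [log_one_div_treeScale]
    have := Real.log_nonneg h1
    positivity

lemma scaleExp_le_pow {d : ℕ} (hd : 2 ≤ d) (M : ℕ) : scaleExp d M ≤ d ^ M := by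
  induction M with
  | zero => simp [scaleExp]
  | succ M ih =>
      have h1 : d ^ M ≤ d ^ M := le_refl _
      have h2 : d ^ (M+1) = d * d ^ M := by ring
      rw [scaleExp_succ]
      have : 2 * d ^ M ≤ d * d ^ M := Nat.mul_le_mul_right _ hd
      omega

lemma pow_pred_le_scaleExp {d N : ℕ} (hN : 1 ≤ N) : d ^ (N - 1) ≤ scaleExp d N := by
  have : N - 1 ∈ Finset.range N := Finset.mem_range.mpr (by omega)
  exact Finset.single_le_sum (f := fun i => d ^ i) (fun i _ => Nat.zero_le _) this

lemma one_le_scaleExp {d N : ℕ} (hd : 1 ≤ d) (hN : 1 ≤ N) : 1 ≤ scaleExp d N := by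
  have h := pow_pred_le_scaleExp (d := d) hN
  have : 1 ≤ d ^ (N - 1) := Nat.one_le_pow _ _ (by omega)
  omega

lemma dimSeq_le_transfer {df dg m n : ℕ} (hdf : 2 ≤ df) (hdg : 2 ≤ dg)
    (hm : 1 ≤ m) (hn : 1 ≤ n) (hD : df ^ m = dg ^ n)
    {A B : ℕ → ℕ} (hB : Monotone B) (hB1 : ∀ N, 1 ≤ B N)
    (hmatch : ∀ k, A (m * k) = B (n * k)) {N : ℕ} (hN : 1 ≤ N) :
    dimSeq dg B N ≤ ((dg : ℝ) ^ (n + 1) * Real.log (df.factorial : ℝ) /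
      Real.log (dg.factorial : ℝ)) * dimSeq df A (m * (N / n + 1)) := by
  set k := N / n + 1 with hk
  have hdm := Nat.div_add_mod N n
  have hmod : N % n < n := Nat.mod_lt _ (by omega)
  have hexp : n * k = n * (N / n) + n := by rw [hk]; ring
  have h1 : N ≤ n * k := by omega
  have hnk : n * k ≤ N + n := by omega
  have hBA : B N ≤ A (m * k) := by rw [hmatch k]; exact hB h1
  have hBpos : (0:ℝ) < (B N : ℝ) := by exact_mod_cast hB1 N
  have hlog : Real.log (B N : ℝ) ≤ Real.log (A (m * k) : ℝ) :=
    Real.log_le_log hBpos (by exact_mod_cast hBA)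
  have hLf : (0:ℝ) < Real.log (df.factorial : ℝ) := Real.log_pos (one_lt_fact hdf)
  have hLg : (0:ℝ) < Real.log (dg.factorial : ℝ) := Real.log_pos (one_lt_fact hdg)
  have hEfnat : scaleExp df (m * k) ≤ dg ^ (n + 1) * scaleExp dg N := by
    have e1 : scaleExp df (m * k) ≤ df ^ (m * k) := scaleExp_le_pow hdf _
    have e2 : df ^ (m * k) = dg ^ (n * k) := by
      rw [pow_mul, pow_mul, hD]
    have e3 : dg ^ (n * k) ≤ dg ^ (N + n) := Nat.pow_le_pow_right (by omega) hnk
    have e4 : dg ^ (N + n) = dg ^ (n + 1) * dg ^ (N - 1) := by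
      rw [← pow_add]
      congr 1
      omega
    have e5 : dg ^ (N - 1) ≤ scaleExp dg N := pow_pred_le_scaleExp hN
    calc scaleExp df (m * k) ≤ dg ^ (n * k) := e2 ▸ e1
      _ ≤ dg ^ (n + 1) * dg ^ (N - 1) := by rw [← e4]; exact e3
      _ ≤ dg ^ (n + 1) * scaleExp dg N := Nat.mul_le_mul_left _ e5
  have hEf_le : (scaleExp df (m * k) : ℝ) ≤ (dg:ℝ) ^ (n + 1) * (scaleExp dg N : ℝ) := by
    exact_mod_cast hEfnat
  have hEfpos : (0:ℝ) < (scaleExp df (m * k) : ℝ) := by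
    have := one_le_scaleExp (d := df) (by omega) (N := m * k) (Nat.mul_pos (by omega : 0 < m) (by rw [hk]; exact Nat.succ_pos _ : 0 < k))
    exact_mod_cast this
  have hEgpos : (0:ℝ) < (scaleExp dg N : ℝ) := by
    have := one_le_scaleExp (d := dg) (by omega) hN
    exact_mod_cast this
  have hlogB : (0:ℝ) ≤ Real.log (B N : ℝ) := Real.log_nonneg (by exact_mod_cast hB1 N)
  have hlogA : (0:ℝ) ≤ Real.log (A (m*k) : ℝ) := le_trans hlogB hlog
  unfold dimSeq
  rw [log_one_div_treeScale, log_one_div_treeScale, div_mul_div_comm, div_le_div_iff₀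
    (by positivity) (by positivity)]
  have h4 : Real.log (B N : ℝ) * (scaleExp df (m * k) : ℝ)
      ≤ Real.log (A (m*k) : ℝ) * ((dg:ℝ) ^ (n + 1) * (scaleExp dg N : ℝ)) :=
    mul_le_mul hlog hEf_le hEfpos.le hlogA
  have h5 := mul_le_mul_of_nonneg_right h4
    (mul_pos hLf hLg).le
  nlinarith [h5]

end Seq

section Transfer
open Filter

lemma eventually_dimSeq_transfer {df dg m n : ℕ} (hdf : 2 ≤ df) (hdg : 2 ≤ dg)
    (hm : 1 ≤ m) (hn : 1 ≤ n) (hD : df ^ m = dg ^ n)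
    {A B : ℕ → ℕ} (hB : Monotone B) (hB1 : ∀ N, 1 ≤ B N)
    (hmatch : ∀ k, A (m * k) = B (n * k)) {c : ℝ}
    (hc : ∀ᶠ M in Filter.atTop, dimSeq df A M ≤ c) :
    ∀ᶠ N in Filter.atTop, dimSeq dg B N ≤
      ((dg : ℝ) ^ (n + 1) * Real.log (df.factorial : ℝ) / Real.log (dg.factorial : ℝ))
        * max c 0 := by
  rw [Filter.eventually_atTop] at hc
  obtain ⟨M0, hM0⟩ := hc
  set C := (dg : ℝ) ^ (n + 1) * Real.log (df.factorial : ℝ) / Real.log (dg.factorial : ℝ)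
    with hC
  have hCpos : 0 < C := by
    rw [hC]
    have h1 := Real.log_pos (one_lt_fact hdf)
    have h2 := Real.log_pos (one_lt_fact hdg)
    positivity
  rw [Filter.eventually_atTop]
  refine ⟨max 1 (n * M0), fun N hN => ?_⟩
  have hN1 : 1 ≤ N := le_trans (le_max_left _ _) hN
  have hNn : n * M0 ≤ N := le_trans (le_max_right _ _) hN
  have hidx : M0 ≤ m * (N / n + 1) := by
    have h2 : M0 ≤ N / n := (Nat.le_div_iff_mul_le (by omega)).mpr (by rwa [Nat.mul_comm] at hNn)
    have h3 : N / n + 1 ≤ m * (N / n + 1) := Nat.le_mul_of_pos_left _ (by omega)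
    omega
  have hle := dimSeq_le_transfer hdf hdg hm hn hD hB hB1 hmatch hN1
  have hbound : dimSeq df A (m * (N / n + 1)) ≤ max c 0 :=
    le_trans (hM0 _ hidx) (le_max_left _ _)
  calc dimSeq dg B N ≤ C * dimSeq df A (m * (N / n + 1)) := hle
    _ ≤ C * max c 0 := mul_le_mul_of_nonneg_left hbound hCpos.le

lemma limsup_dimSeq_transfer {df dg m n : ℕ} (hdf : 2 ≤ df) (hdg : 2 ≤ dg)
    (hm : 1 ≤ m) (hn : 1 ≤ n) (hD : df ^ m = dg ^ n)
    {A B : ℕ → ℕ} (hA : Monotone A) (hB : Monotone B)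
    (hA1 : ∀ N, 1 ≤ A N) (hB1 : ∀ N, 1 ≤ B N)
    (hmatch : ∀ k, A (m * k) = B (n * k))
    (hx : Filter.limsup (dimSeq df A) Filter.atTop = 0) :
    Filter.limsup (dimSeq dg B) Filter.atTop = 0 := by
  set C := (dg : ℝ) ^ (n + 1) * Real.log (df.factorial : ℝ) / Real.log (dg.factorial : ℝ)
    with hC
  have hCpos : 0 < C := by
    rw [hC]
    have h1 := Real.log_pos (one_lt_fact hdf)
    have h2 := Real.log_pos (one_lt_fact hdg)
    positivity
  by_cases hbdd : Filter.IsBoundedUnder (· ≤ ·) Filter.atTop (dimSeq df A)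
  · have htend : Filter.Tendsto (dimSeq dg B) Filter.atTop (nhds 0) := by
      rw [NormedAddCommGroup.tendsto_nhds_zero]
      intro ε hε
      have hε2 : (0:ℝ) < ε / (2 * C) := by positivity
      have hev : ∀ᶠ M in Filter.atTop, dimSeq df A M ≤ ε / (2 * C) := by
        filter_upwards [Filter.eventually_lt_of_limsup_lt (by rw [hx]; exact hε2) hbdd]
          with M hM using hM.le
      filter_upwards [eventually_dimSeq_transfer hdf hdg hm hn hD hB hB1 hmatch hev] with N hN
      have h0b : 0 ≤ dimSeq dg B N := dimSeq_nonneg _ _ _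
      rw [Real.norm_of_nonneg h0b]
      have hmax : max (ε / (2 * C)) 0 = ε / (2 * C) := max_eq_left hε2.le
      rw [← hC] at hN
      rw [hmax] at hN
      calc dimSeq dg B N ≤ C * (ε / (2 * C)) := hN
        _ = ε / 2 := by field_simp
        _ < ε := by linarith
    exact htend.limsup_eq
  · have hbddB : ¬ Filter.IsBoundedUnder (· ≤ ·) Filter.atTop (dimSeq dg B) := by
      rintro ⟨c, hc⟩
      rw [Filter.eventually_map] at hc
      apply hbdd
      have hev := eventually_dimSeq_transfer hdg hdf hn hm hD.symm hA hA1
        (fun k => (hmatch k).symm) hc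
      exact ⟨_, Filter.eventually_map.mpr hev⟩
    rw [Filter.limsup_eq]
    have hemp : {a : ℝ | ∀ᶠ N in Filter.atTop, dimSeq dg B N ≤ a} = ∅ := by
      rw [Set.eq_empty_iff_forall_notMem]
      intro c hc
      exact hbddB ⟨c, Filter.eventually_map.mpr hc⟩
    rw [hemp]
    exact Real.sInf_empty

end Transfer

-- === counting preliminaries (abstract) ===
section Count
variable {X : Type*}

lemma preimage_finite (F : X → X) (hfib : ∀ c, (F ⁻¹' {c}).Finite) {s : Set X}
    (hs : s.Finite) : (F ⁻¹' s).Finite := by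
  have h : F ⁻¹' s = ⋃ b ∈ s, F ⁻¹' {b} := by
    ext x; simp [eq_comm]
  rw [h]
  exact hs.biUnion (fun b _ => hfib b)

lemma iterate_fiber_finite (F : X → X) (hfib : ∀ c, (F ⁻¹' {c}).Finite) :
    ∀ (j : ℕ) (c : X), (F^[j] ⁻¹' {c}).Finite := by
  intro j
  induction j with
  | zero => intro c; exact (Set.finite_singleton c).subset (by simp)
  | succ j ih =>
      intro c
      have h : F^[j+1] ⁻¹' {c} = F ⁻¹' (F^[j] ⁻¹' {c}) := by
        ext x
        simp [Function.iterate_succ_apply]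
      rw [h]
      exact preimage_finite F hfib (ih c)

lemma ncard_preimage (F : X → X) (d : ℕ) (hfib : ∀ c, (F ⁻¹' {c}).Finite) {s : Set X}
    (hs : s.Finite) (h : ∀ b ∈ s, (F ⁻¹' {b}).ncard = d) :
    (F ⁻¹' s).ncard = d * s.ncard := by
  refine Set.Finite.induction_on
    (motive := fun t _ => (∀ b ∈ t, (F ⁻¹' {b}).ncard = d) → (F ⁻¹' t).ncard = d * t.ncard)
    s hs (by simp) ?_ h
  intro a t ha htfin ih hgood
  have hsplit : F ⁻¹' (insert a t) = F ⁻¹' {a} ∪ F ⁻¹' t := by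
    rw [Set.insert_eq, Set.preimage_union]
  have hdisj : Disjoint (F ⁻¹' {a}) (F ⁻¹' t) := by
    rw [Set.disjoint_iff_inter_eq_empty]
    ext x
    simp only [Set.mem_inter_iff, Set.mem_preimage, Set.mem_singleton_iff,
      Set.mem_empty_iff_false, iff_false, not_and]
    rintro rfl
    exact fun hx => ha hx
  rw [hsplit, Set.ncard_union_eq hdisj (hfib a) (preimage_finite F hfib htfin),
    ih (fun b hb => hgood b (Set.mem_insert_of_mem _ hb)),
    hgood a (Set.mem_insert _ _),
    Set.ncard_insert_of_notMem ha htfin]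
  ring

lemma iterate_fiber_ncard (F : X → X) (d : ℕ) (hfib : ∀ c, (F ⁻¹' {c}).Finite) (c : X)
    (m : ℕ) (hgood : ∀ j, j < m → ∀ b, F^[j] b = c → (F ⁻¹' {b}).ncard = d) :
    ((F^[m]) ⁻¹' {c}).ncard = d ^ m := by
  induction m with
  | zero => simp
  | succ m ih =>
      have h : F^[m+1] ⁻¹' {c} = F ⁻¹' (F^[m] ⁻¹' {c}) := by
        ext x
        simp [Function.iterate_succ_apply]
      rw [h, ncard_preimage F d hfib (iterate_fiber_finite F hfib m c)
          (fun b hb => hgood m (by omega) b hb),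
        ih (fun j hj b hb => hgood j (by omega) b hb)]
      ring

end Count


section Alg
variable {K : Type*} [Field K] {p q : Polynomial K}

local notation "A" => Kbar K
local notation "FF" => ratAct p q (Kbar K)
local notation "P" => p.map (algebraMap K (Kbar K))
local notation "Q" => q.map (algebraMap K (Kbar K))

lemma aeval_eq_eval_map (r : Polynomial K) (x : A) :
    Polynomial.aeval x r = (r.map (algebraMap K A)).eval x := by
  rw [Polynomial.eval_map, Polynomial.aeval_def]

lemma nonzero_of_coprime (hpq : IsCoprime p q) (hd2 : 2 ≤ max p.natDegree q.natDegree) :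
    p ≠ 0 ∧ q ≠ 0 := by
  constructor
  · rintro rfl
    have hu : IsUnit q := isCoprime_zero_left.mp hpq
    have := Polynomial.natDegree_eq_zero_of_isUnit hu
    simp [this] at hd2
  · rintro rfl
    have hu : IsUnit p := isCoprime_zero_right.mp hpq
    have := Polynomial.natDegree_eq_zero_of_isUnit hu
    simp [this] at hd2

lemma no_common_root (hpq : IsCoprime p q) (x : A) :
    ¬(Polynomial.aeval x p = 0 ∧ Polynomial.aeval x q = 0) := by
  rintro ⟨hp, hq⟩
  obtain ⟨a, b, hab⟩ := hpq
  have := congrArg (Polynomial.aeval x) hab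
  simp [hp, hq] at this

lemma coprime_map (hpq : IsCoprime p q) : IsCoprime P Q :=
  hpq.map (Polynomial.mapRingHom (algebraMap K (Kbar K)))

lemma natDegree_P : (P).natDegree = p.natDegree := Polynomial.natDegree_map _
lemma natDegree_Q : (Q).natDegree = q.natDegree := Polynomial.natDegree_map _

lemma ratAct_galP1 (σ : Kbar K ≃ₐ[K] Kbar K) (x : Option A) :
    galP1 σ (ratAct p q (Kbar K) x) = ratAct p q (Kbar K) (galP1 σ x) := by
  cases x with
  | none =>
      simp only [galP1, Option.map_none, ratAct]
      split_ifs <;> simp [Option.map_some, map_zero, AlgEquiv.commutes]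
  | some a =>
      simp only [galP1, Option.map_some, ratAct]
      have hq : Polynomial.aeval (σ a) q = σ (Polynomial.aeval a q) :=
        Polynomial.aeval_algHom_apply (σ : Kbar K →ₐ[K] Kbar K) a q
      have hp : Polynomial.aeval (σ a) p = σ (Polynomial.aeval a p) :=
        Polynomial.aeval_algHom_apply (σ : Kbar K →ₐ[K] Kbar K) a p
      by_cases h : Polynomial.aeval a q = 0
      · rw [if_pos h, if_pos (by rw [hq, h, map_zero])]
        rfl
      · rw [if_neg h, if_neg (fun hc => h (by rw [hq] at hc; exact EmbeddingLike.map_eq_zero_iff.mp hc))]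
        simp only [Option.map_some]
        rw [hp, hq, map_div₀]

lemma Rv_ne_zero (hpq : IsCoprime p q) (hd2 : 2 ≤ max p.natDegree q.natDegree) (v : A) :
    P - Polynomial.C v * Q ≠ 0 := by
  intro h
  have hPQ : IsCoprime P Q := coprime_map hpq
  have hPeq : P = Polynomial.C v * Q := by
    rwa [sub_eq_zero] at h
  have hdvd : Q ∣ P := ⟨Polynomial.C v, by rw [hPeq, mul_comm]⟩
  have hu : IsUnit Q := hPQ.isUnit_of_dvd' hdvd dvd_rfl
  have hq0 : q.natDegree = 0 := by
    rw [← natDegree_Q]; exact Polynomial.natDegree_eq_zero_of_isUnit hu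
  have hp0 : p.natDegree = 0 := by
    rw [← natDegree_P, hPeq]
    have h1 := Polynomial.natDegree_mul_le (p := Polynomial.C v) (q := Q)
    have h2 : (Polynomial.C v).natDegree = 0 := Polynomial.natDegree_C v
    have h3 := natDegree_Q (K := K) (q := q)
    omega
  omega

lemma ratAct_some_eq_some {x v : A} :
    ratAct p q (Kbar K) (some x) = some v ↔
      (Q).eval x ≠ 0 ∧ (P).eval x = v * (Q).eval x := by
  rw [ratAct]
  by_cases h : Polynomial.aeval x q = 0
  · rw [if_pos h]
    rw [aeval_eq_eval_map] at h
    simp [h]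
  · rw [if_neg h]
    rw [aeval_eq_eval_map] at h
    simp only [Option.some.injEq, aeval_eq_eval_map]
    constructor
    · rintro rfl
      exact ⟨h, (div_mul_cancel₀ _ h).symm⟩
    · rintro ⟨-, h2⟩
      rw [h2]
      exact mul_div_cancel_right₀ _ h

lemma ratAct_some_eq_none {x : A} :
    ratAct p q (Kbar K) (some x) = none ↔ (Q).eval x = 0 := by
  rw [ratAct, ← aeval_eq_eval_map]
  split_ifs with h <;> simp [h]

lemma fiber_finite (hpq : IsCoprime p q) (hd2 : 2 ≤ max p.natDegree q.natDegree)
    (c : Option A) : (ratAct p q (Kbar K) ⁻¹' {c}).Finite := by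
  obtain ⟨hp0, hq0⟩ := nonzero_of_coprime hpq hd2
  cases c with
  | none =>
      apply Set.Finite.subset
        (Set.Finite.insert none ((Polynomial.finite_setOf_isRoot
          (Polynomial.map_ne_zero hq0 : (Q) ≠ 0)).image some))
      rintro (_ | x) hy
      · exact Set.mem_insert _ _
      · refine Set.mem_insert_of_mem _ ⟨x, ?_, rfl⟩
        exact ratAct_some_eq_none.mp hy
  | some v =>
      apply Set.Finite.subset
        (Set.Finite.insert none ((Polynomial.finite_setOf_isRoot
          (Rv_ne_zero hpq hd2 v)).image some))
      rintro (_ | x) hy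
      · exact Set.mem_insert _ _
      · refine Set.mem_insert_of_mem _ ⟨x, ?_, rfl⟩
        obtain ⟨h1, h2⟩ := ratAct_some_eq_some.mp hy
        simp only [Set.mem_setOf_eq, Polynomial.IsRoot, Polynomial.eval_sub,
          Polynomial.eval_mul, Polynomial.eval_C, h2, sub_self]

lemma ratAct_surjective (hpq : IsCoprime p q) (hd2 : 2 ≤ max p.natDegree q.natDegree) :
    Function.Surjective (ratAct p q (Kbar K)) := by
  obtain ⟨hp0, hq0⟩ := nonzero_of_coprime hpq hd2
  intro c
  cases c with
  | none =>
      rcases Nat.eq_zero_or_pos q.natDegree with hq | hq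
      · refine ⟨none, ?_⟩
        rw [ratAct, if_pos (by omega)]
      · have hQdeg : (Q).natDegree ≠ 0 := by rw [natDegree_Q]; omega
        have hroot : ∃ x, (Q).IsRoot x := by
          apply IsAlgClosed.exists_root
          intro hdeg
          exact hQdeg (Polynomial.natDegree_eq_zero_iff_degree_le_zero.mpr (le_of_eq hdeg))
        obtain ⟨x, hx⟩ := hroot
        exact ⟨some x, ratAct_some_eq_none.mpr hx⟩
  | some v =>
      set R := P - Polynomial.C v * Q with hR
      have hR0 : R ≠ 0 := Rv_ne_zero hpq hd2 v
      rcases Nat.eq_zero_or_pos R.natDegree with hRdeg | hRdeg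
      · -- R is a nonzero constant
        obtain ⟨e, hRe⟩ : ∃ e, R = Polynomial.C e := ⟨R.coeff 0, Polynomial.eq_C_of_natDegree_eq_zero hRdeg⟩
        have hPeq : P = Polynomial.C v * Q + Polynomial.C e := by
          rw [← hRe, hR]; ring
        have hqdeg : 1 ≤ q.natDegree := by
          by_contra hq
          have hq0' : q.natDegree = 0 := by omega
          have hQ0 : (Q).natDegree = 0 := by rw [natDegree_Q]; omega
          have hP0 : (P).natDegree = 0 := by
            rw [hPeq]
            have h1 := Polynomial.natDegree_add_le (Polynomial.C v * Q) (Polynomial.C e)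
            have h2 := Polynomial.natDegree_mul_le (p := Polynomial.C v) (q := Q)
            have h3 := Polynomial.natDegree_C v
            have h4 := Polynomial.natDegree_C e
            omega
          have := natDegree_P (K := K) (p := p)
          omega
        by_cases hv : v = 0
        · -- P is constant, fiber of v=0 contains ∞
          have hP0 : (P).natDegree = 0 := by
            rw [hPeq, hv]
            simp
          have hpdeg : p.natDegree = 0 := by rw [← natDegree_P]; exact hP0
          have hqd : q.natDegree = max p.natDegree q.natDegree := by omega
          refine ⟨none, ?_⟩
          rw [ratAct, if_neg (by omega), if_pos (by omega), hv]
        · -- deg p = deg q, v is the ratio of leading coefficients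
          have hQdeg : (Q).natDegree = q.natDegree := natDegree_Q
          have hCQ : (Polynomial.C v * Q).natDegree = q.natDegree := by
            rw [Polynomial.natDegree_C_mul hv, hQdeg]
          have hPdeg : (P).natDegree = q.natDegree := by
            rw [hPeq]
            rw [Polynomial.natDegree_add_C, hCQ]
          have hpq' : p.natDegree = q.natDegree := by rw [← natDegree_P, hPdeg]
          have hlc : (P).leadingCoeff = v * (Q).leadingCoeff := by
            have h1 : (P).leadingCoeff = (P).coeff q.natDegree := by
              rw [Polynomial.leadingCoeff, hPdeg]
            rw [h1, hPeq]
            rw [Polynomial.coeff_add, Polynomial.coeff_C_mul,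
              Polynomial.coeff_C, if_neg (by omega : ¬ q.natDegree = 0)]
            rw [add_zero, Polynomial.leadingCoeff, hQdeg]
          refine ⟨none, ?_⟩
          rw [ratAct, if_neg (by omega), if_neg (by omega)]
          congr 1
          rw [map_div₀]
          rw [← Polynomial.leadingCoeff_map (algebraMap K (Kbar K)),
            ← Polynomial.leadingCoeff_map (algebraMap K (Kbar K)), hlc,
            mul_div_assoc, div_self (by
              intro h
              exact (Polynomial.map_ne_zero hq0 : (Q) ≠ 0) (Polynomial.leadingCoeff_eq_zero.mp h)),
            mul_one]
      · -- R nonconstant: it has a root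
        have : ∃ x, R.IsRoot x := by
          apply IsAlgClosed.exists_root
          intro hdeg
          exact absurd (Polynomial.natDegree_eq_zero_iff_degree_le_zero.mpr (le_of_eq hdeg)) (by omega)
        obtain ⟨x, hx⟩ := this
        have hPx : (P).eval x = v * (Q).eval x := by
          have := hx
          simp only [Polynomial.IsRoot, hR, Polynomial.eval_sub, Polynomial.eval_mul,
            Polynomial.eval_C, sub_eq_zero] at this
          exact this
        have hQx : (Q).eval x ≠ 0 := by
          intro h0
          apply no_common_root hpq x
          rw [aeval_eq_eval_map, aeval_eq_eval_map, h0, hPx, h0, mul_zero]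
          exact ⟨rfl, rfl⟩
        exact ⟨some x, ratAct_some_eq_some.mpr ⟨hQx, hPx⟩⟩


-- === the Wronskian is nonzero ===
lemma wronskian_ne_zero [CharZero K] (hpq : IsCoprime p q)
    (hd2 : 2 ≤ max p.natDegree q.natDegree) :
    (P) * Polynomial.derivative (Q) - Polynomial.derivative (P) * (Q) ≠ 0 := by
  obtain ⟨hp0, hq0⟩ := nonzero_of_coprime hpq hd2
  have hP0 : (P) ≠ 0 := Polynomial.map_ne_zero hp0
  have hQ0 : (Q) ≠ 0 := Polynomial.map_ne_zero hq0
  intro h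
  have heq : (P) * Polynomial.derivative (Q) = Polynomial.derivative (P) * (Q) := by
    rwa [sub_eq_zero] at h
  have hPQ : IsCoprime P Q := coprime_map hpq
  rcases Nat.eq_zero_or_pos (P).natDegree with hPd | hPd
  · -- P constant; then Q' = 0 so q is constant too; contradiction with degrees
    have hP' : Polynomial.derivative (P) = 0 := by
      rw [Polynomial.eq_C_of_natDegree_eq_zero hPd]
      exact Polynomial.derivative_C
    rw [hP', zero_mul] at heq
    have hQ' : Polynomial.derivative (Q) = 0 := by
      rcases mul_eq_zero.mp heq with h1 | h1
      · exact absurd h1 hP0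
      · exact h1
    have hQd : (Q).natDegree = 0 := Polynomial.natDegree_eq_zero_of_derivative_eq_zero hQ'
    have h1 := natDegree_P (K := K) (p := p)
    have h2 := natDegree_Q (K := K) (q := q)
    omega
  · -- P nonconstant: P ∣ P' with deg P' < deg P, contradiction
    have hdvd : (P) ∣ Polynomial.derivative (P) * (Q) := ⟨Polynomial.derivative (Q), heq.symm⟩
    have hdvd' : (P) ∣ Polynomial.derivative (P) := hPQ.dvd_of_dvd_mul_right hdvd
    have hP'0 : Polynomial.derivative (P) ≠ 0 := by
      intro h0
      have := Polynomial.natDegree_eq_zero_of_derivative_eq_zero h0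
      omega
    have hlt := Polynomial.natDegree_derivative_lt (p := (P)) (by omega)
    have hle := Polynomial.natDegree_le_of_dvd hdvd' hP'0
    omega

-- === common root of non-coprime polynomials (over the algebraically closed Kbar) ===
lemma exists_common_root {S T : Polynomial A} (hS : S ≠ 0) (h : ¬ IsCoprime S T) :
    ∃ x, S.IsRoot x ∧ T.IsRoot x := by
  classical
  set g := EuclideanDomain.gcd S T with hg
  have hg0 : g ≠ 0 := by
    intro h0
    exact hS (EuclideanDomain.gcd_eq_zero_iff.mp h0).1
  have hgu : ¬ IsUnit g := fun hu => h (EuclideanDomain.gcd_isUnit_iff.mp hu)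
  have hdeg : g.degree ≠ 0 := fun hd => hgu (Polynomial.isUnit_iff_degree_eq_zero.mpr hd)
  obtain ⟨x, hx⟩ := IsAlgClosed.exists_root g hdeg
  exact ⟨x, Polynomial.eval_eq_zero_of_dvd_of_eval_eq_zero (EuclideanDomain.gcd_dvd_left S T) hx,
    Polynomial.eval_eq_zero_of_dvd_of_eval_eq_zero (EuclideanDomain.gcd_dvd_right S T) hx⟩

-- === the set of points with fiber size ≠ d is finite ===
lemma bad_fiber_finite [CharZero K] (hpq : IsCoprime p q)
    (hd2 : 2 ≤ max p.natDegree q.natDegree) :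
    {c : Option A | (ratAct p q (Kbar K) ⁻¹' {c}).ncard ≠ max p.natDegree q.natDegree}.Finite := by
  obtain ⟨hp0, hq0⟩ := nonzero_of_coprime hpq hd2
  have hP0 : (P) ≠ 0 := Polynomial.map_ne_zero hp0
  have hQ0 : (Q) ≠ 0 := Polynomial.map_ne_zero hq0
  set d := max p.natDegree q.natDegree with hd
  set W := (P) * Polynomial.derivative (Q) - Polynomial.derivative (P) * (Q) with hW
  have hW0 : W ≠ 0 := wronskian_ne_zero hpq hd2
  -- the exceptional sets
  set badDeg : Set A := {v | ((P) - Polynomial.C v * (Q)).natDegree ≠ d} with hbadDeg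
  have hbadDegFin : badDeg.Finite := by
    rcases lt_or_ge q.natDegree d with hqd | hqd
    · have : badDeg = ∅ := by
        rw [Set.eq_empty_iff_forall_notMem]
        intro v hv
        apply hv
        have h1 : (Polynomial.C v * (Q)).natDegree < (P).natDegree := by
          have h2 := Polynomial.natDegree_mul_le (p := Polynomial.C v) (q := (Q))
          have h3 := Polynomial.natDegree_C v
          have h4 := natDegree_Q (K := K) (q := q)
          have h5 := natDegree_P (K := K) (p := p)
          omega
        rw [Polynomial.natDegree_sub_eq_left_of_natDegree_lt h1, natDegree_P]
        omega
      rw [this]; exact Set.finite_empty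
    · have hqd' : q.natDegree = d := by omega
      apply Set.Finite.subset (Set.finite_singleton ((P).coeff d / (Q).coeff d))
      intro v hv
      simp only [Set.mem_singleton_iff]
      by_contra hne
      apply hv
      have hQc : (Q).coeff d ≠ 0 := by
        have : (Q).natDegree = d := by rw [natDegree_Q]; omega
        rw [← this]
        exact Polynomial.leadingCoeff_ne_zero.mpr hQ0
      have hcoeff : ((P) - Polynomial.C v * (Q)).coeff d ≠ 0 := by
        rw [Polynomial.coeff_sub, Polynomial.coeff_C_mul]
        intro h0
        apply hne
        rw [eq_div_iff hQc]
        linear_combination -h0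
      have hub : ((P) - Polynomial.C v * (Q)).natDegree ≤ d := by
        have h1 := Polynomial.natDegree_sub_le (P) (Polynomial.C v * (Q))
        have h2 := Polynomial.natDegree_mul_le (p := Polynomial.C v) (q := (Q))
        have h3 := Polynomial.natDegree_C v
        have h4 := natDegree_Q (K := K) (q := q)
        have h5 := natDegree_P (K := K) (p := p)
        omega
      have hlb := Polynomial.le_natDegree_of_ne_zero hcoeff
      omega
  -- main inclusion
  have hsub : {c : Option A | (ratAct p q (Kbar K) ⁻¹' {c}).ncard ≠ d} ⊆
      insert none (insert (ratAct p q (Kbar K) none)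
        (Option.some '' (((fun x => (P).eval x / (Q).eval x) '' {x | W.IsRoot x}) ∪ badDeg))) := by
    intro c hc
    cases c with
    | none => exact Set.mem_insert _ _
    | some v =>
        by_contra hS
        have hnotmem : ¬ (some v = ratAct p q (Kbar K) none ∨
            v ∈ ((fun x => (P).eval x / (Q).eval x) '' {x | W.IsRoot x} ∪ badDeg)) := by
          intro hmem
          apply hS
          rcases hmem with h | h
          · exact Set.mem_insert_of_mem _ (h ▸ Set.mem_insert _ _)
          · exact Set.mem_insert_of_mem _ (Set.mem_insert_of_mem _ ⟨v, h, rfl⟩)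
        obtain ⟨hinfty', hunion⟩ := not_or.mp hnotmem
        have hinfty : ratAct p q (Kbar K) none ≠ some v := fun h => hinfty' h.symm
        obtain ⟨hWim, hdegv⟩ := not_or.mp ((Set.mem_union _ _ _).not.mp hunion)
        have hWv : ∀ x, W.IsRoot x → (P).eval x / (Q).eval x ≠ v :=
          fun x hx hval => hWim ⟨x, hx, hval⟩
        set R := (P) - Polynomial.C v * (Q) with hRdef
        have hR0 : R ≠ 0 := Rv_ne_zero hpq hd2 v
        have hRd : R.natDegree = d := by
          by_contra hbad
          exact hdegv hbad
        -- every root of R is a simple root, i.e. R is separable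
        have hQne : ∀ x : A, R.IsRoot x → (Q).eval x ≠ 0 := by
          intro x hx h0
          apply no_common_root hpq x
          have hPx : (P).eval x = 0 := by
            have : (P).eval x - v * (Q).eval x = 0 := by
              simpa [hRdef, Polynomial.eval_sub, Polynomial.eval_mul, Polynomial.eval_C]
                using hx
            rw [h0] at this
            simpa using this
          rw [aeval_eq_eval_map, aeval_eq_eval_map]
          exact ⟨hPx, h0⟩
        have hsep : R.Separable := by
          rw [Polynomial.separable_def]
          by_contra hns
          obtain ⟨x, hx1, hx2⟩ := exists_common_root hR0 hns
          have hQx := hQne x hx1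
          have hPx : (P).eval x = v * (Q).eval x := by
            have : (P).eval x - v * (Q).eval x = 0 := by
              simpa [hRdef, Polynomial.eval_sub, Polynomial.eval_mul, Polynomial.eval_C]
                using hx1
            linear_combination this
          have hR' : Polynomial.derivative R
              = Polynomial.derivative (P) - Polynomial.C v * Polynomial.derivative (Q) := by
            rw [hRdef, Polynomial.derivative_sub, Polynomial.derivative_C_mul]
          have hPx' : (Polynomial.derivative (P)).eval x
              = v * (Polynomial.derivative (Q)).eval x := by
            have : (Polynomial.derivative (P)).eval x
                - v * (Polynomial.derivative (Q)).eval x = 0 := by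
              simpa [hR', Polynomial.eval_sub, Polynomial.eval_mul, Polynomial.eval_C]
                using hx2
            linear_combination this
          have hxW : W.IsRoot x := by
            simp only [Polynomial.IsRoot, hW, Polynomial.eval_sub, Polynomial.eval_mul,
              hPx, hPx']
            ring
          apply hWv x hxW
          rw [div_eq_iff hQx]
          exact hPx
        -- the fiber over `some v` is the image of the root set of R
        have hfib_eq : ratAct p q (Kbar K) ⁻¹' {some v} = Option.some '' {x | R.IsRoot x} := by
          ext y
          cases y with
          | none =>
              simp only [Set.mem_preimage, Set.mem_singleton_iff, Set.mem_image]
              constructor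
              · intro h0
                exact absurd h0 hinfty
              · rintro ⟨x, -, hx⟩
                exact absurd hx (by simp)
          | some x =>
              simp only [Set.mem_preimage, Set.mem_singleton_iff, Set.mem_image]
              rw [ratAct_some_eq_some]
              constructor
              · rintro ⟨h1, h2⟩
                refine ⟨x, ?_, rfl⟩
                simp only [Set.mem_setOf_eq, Polynomial.IsRoot, hRdef, Polynomial.eval_sub,
                  Polynomial.eval_mul, Polynomial.eval_C, h2, sub_self]
              · rintro ⟨x', hx', hxx⟩
                obtain rfl : x' = x := Option.some_injective _ hxx
                have hQx := hQne x' hx'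
                refine ⟨hQx, ?_⟩
                have : (P).eval x' - v * (Q).eval x' = 0 := by
                  simpa [hRdef, Polynomial.eval_sub, Polynomial.eval_mul, Polynomial.eval_C]
                    using hx'
                linear_combination this
        apply hc
        rw [hfib_eq, Set.ncard_image_of_injective _ (Option.some_injective A)]
        have hset : {x | R.IsRoot x} = (R.roots.toFinset : Set A) := by
          ext z
          simp [Multiset.mem_toFinset, Polynomial.mem_roots', hR0]
        rw [hset, Set.ncard_coe_finset, Multiset.toFinset_card_of_nodup
          (Polynomial.nodup_roots hsep), ← hRd]
        exact (Polynomial.splits_iff_card_roots.mp (IsAlgClosed.splits R))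
  apply Set.Finite.subset _ hsub
  exact Set.Finite.insert _ (Set.Finite.insert _
    (Set.Finite.image _ (Set.Finite.union
      ((Polynomial.finite_setOf_isRoot hW0).image _) hbadDegFin)))

-- === the degree identity from a shared iterate ===
lemma deg_pow_eq_of_share {K : Type*} [Field K] [CharZero K] {p q r s : Polynomial K}
    (hf : IsCoprime p q) (hg : IsCoprime r s)
    (hdf : 2 ≤ max p.natDegree q.natDegree) (hdg : 2 ≤ max r.natDegree s.natDegree)
    {m n : ℕ}
    (hshare : (ratAct p q (Kbar K))^[m] = (ratAct r s (Kbar K))^[n]) :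
    (max p.natDegree q.natDegree) ^ m = (max r.natDegree s.natDegree) ^ n := by
  classical
  set F := ratAct p q (Kbar K) with hF
  set G := ratAct r s (Kbar K) with hG
  set BadF := {c : Option (Kbar K) | (F ⁻¹' {c}).ncard ≠ max p.natDegree q.natDegree} with hBadF
  set BadG := {c : Option (Kbar K) | (G ⁻¹' {c}).ncard ≠ max r.natDegree s.natDegree} with hBadG
  have hBF : BadF.Finite := bad_fiber_finite hf hdf
  have hBG : BadG.Finite := bad_fiber_finite hg hdg
  set S : Set (Option (Kbar K)) :=
    (⋃ j ∈ Finset.range m, F^[j] '' BadF) ∪ (⋃ j ∈ Finset.range n, G^[j] '' BadG) with hS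
  have hSfin : S.Finite := by
    apply Set.Finite.union
    · exact Set.Finite.biUnion (Finset.range m).finite_toSet (fun j _ => hBF.image _)
    · exact Set.Finite.biUnion (Finset.range n).finite_toSet (fun j _ => hBG.image _)
  obtain ⟨c, hc⟩ := hSfin.infinite_compl.nonempty
  have hgoodF : ∀ j, j < m → ∀ b, F^[j] b = c → (F ⁻¹' {b}).ncard = max p.natDegree q.natDegree := by
    intro j hj b hb
    by_contra hbad
    apply hc
    rw [hS]
    exact Set.mem_union_left _ (Set.mem_biUnion (Finset.mem_coe.mpr (Finset.mem_range.mpr hj))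
      ⟨b, hbad, hb⟩)
  have hgoodG : ∀ j, j < n → ∀ b, G^[j] b = c → (G ⁻¹' {b}).ncard = max r.natDegree s.natDegree := by
    intro j hj b hb
    by_contra hbad
    apply hc
    rw [hS]
    exact Set.mem_union_right _ (Set.mem_biUnion (Finset.mem_coe.mpr (Finset.mem_range.mpr hj))
      ⟨b, hbad, hb⟩)
  have h1 := iterate_fiber_ncard F _ (fiber_finite hf hdf) c m hgoodF
  have h2 := iterate_fiber_ncard G _ (fiber_finite hg hdg) c n hgoodG
  rw [← h1, ← h2, hshare]
end Alg

-- ======== general range cardinality lemma ========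
lemma card_range_eq {Γ : Type*} {X Y : Type*} (u : Γ → X) (w : Γ → Y)
    (h : ∀ a b, u a = u b ↔ w a = w b) : Nat.card (Set.range u) = Nat.card (Set.range w) := by
  classical
  apply Nat.card_congr
  refine Equiv.ofBijective (fun x => ⟨w x.2.choose, Set.mem_range_self _⟩) ⟨?_, ?_⟩
  · rintro x y hxy
    have hx : u x.2.choose = x.1 := x.2.choose_spec
    have hy : u y.2.choose = y.1 := y.2.choose_spec
    have : w x.2.choose = w y.2.choose := by
      simpa using congrArg Subtype.val hxy
    apply Subtype.ext
    rw [← hx, ← hy]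
    exact (h _ _).mpr this
  · rintro ⟨y, b, rfl⟩
    refine ⟨⟨u b, Set.mem_range_self b⟩, ?_⟩
    apply Subtype.ext
    have hx : u (Set.mem_range_self (f := u) b).choose = u b :=
      (Set.mem_range_self (f := u) b).choose_spec
    exact (h _ _).mp hx

-- ======== Galois-equivariance machinery ========
section Gal
variable {K : Type*} [Field K] {p q : Polynomial K}

lemma galP1_iterate (σ : Kbar K ≃ₐ[K] Kbar K) (j : ℕ) (x : P1 (Kbar K)) :
    galP1 σ ((ratAct p q (Kbar K))^[j] x) = (ratAct p q (Kbar K))^[j] (galP1 σ x) := by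
  induction j generalizing x with
  | zero => rfl
  | succ j ih =>
      rw [Function.iterate_succ_apply, Function.iterate_succ_apply, ← ratAct_galP1 σ x, ih]

lemma galP1_symm_apply (σ : Kbar K ≃ₐ[K] Kbar K) (x : P1 (Kbar K)) :
    galP1 σ.symm (galP1 σ x) = x := by
  cases x with
  | none => rfl
  | some a => simp [galP1]

lemma galP1_apply_symm (σ : Kbar K ≃ₐ[K] Kbar K) (x : P1 (Kbar K)) :
    galP1 σ (galP1 σ.symm x) = x := by
  cases x with
  | none => rfl
  | some a => simp [galP1]

lemma galP1_injective (σ : Kbar K ≃ₐ[K] Kbar K) : Function.Injective (galP1 σ) :=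
  Option.map_injective σ.injective

lemma galP1_P1K (σ : Kbar K ≃ₐ[K] Kbar K) (α : P1 K) : galP1 σ (P1K α) = P1K α := by
  cases α with
  | none => rfl
  | some a => simp [galP1, P1K, AlgEquiv.commutes]

variable (p q) in
def permOfGal (α : P1 K) (σ : Kbar K ≃ₐ[K] Kbar K) (j : ℕ) :
    Equiv.Perm (preV (ratAct p q (Kbar K)) (P1K α) j) where
  toFun β := ⟨galP1 σ β.1, by rw [← galP1_iterate, β.2, galP1_P1K]⟩
  invFun β := ⟨galP1 σ.symm β.1, by rw [← galP1_iterate, β.2, galP1_P1K]⟩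
  left_inv β := Subtype.ext (galP1_symm_apply σ β.1)
  right_inv β := Subtype.ext (galP1_apply_symm σ β.1)

lemma permOfGal_coe (α : P1 K) (σ : Kbar K ≃ₐ[K] Kbar K) (j : ℕ)
    (β : preV (ratAct p q (Kbar K)) (P1K α) j) :
    (permOfGal p q α σ j β : P1 (Kbar K)) = galP1 σ (β : P1 (Kbar K)) := rfl

lemma famOfGal_mem (α : P1 K) (σ : Kbar K ≃ₐ[K] Kbar K) :
    (fun j => permOfGal p q α σ j) ∈ arbGal (K := K) galP1 ⊥ (ratAct p q (Kbar K)) (P1K α) := by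
  refine ⟨σ, ?_, ?_⟩
  · intro x hx
    obtain ⟨k, rfl⟩ := IntermediateField.mem_bot.mp hx
    exact σ.commutes k
  · intro n β
    rfl

-- top level determines all lower levels
lemma top_determines (hpq : IsCoprime p q) (hd2 : 2 ≤ max p.natDegree q.natDegree)
    (α : P1 K) (σ σ' : Kbar K ≃ₐ[K] Kbar K) (N : ℕ)
    (h : ∀ β : P1 (Kbar K), (ratAct p q (Kbar K))^[N] β = P1K α → galP1 σ β = galP1 σ' β) :
    ∀ j, j ≤ N → ∀ β : P1 (Kbar K), (ratAct p q (Kbar K))^[j] β = P1K α →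
      galP1 σ β = galP1 σ' β := by
  intro j hj β hβ
  obtain ⟨γ, hγ⟩ := (ratAct_surjective hpq hd2).iterate (N - j) β
  have hγN : (ratAct p q (Kbar K))^[N] γ = P1K α := by
    have hN : N = j + (N - j) := by omega
    rw [hN, Function.iterate_add_apply, hγ, hβ]
  have hg := h γ hγN
  rw [← hγ, galP1_iterate, galP1_iterate, hg]

end Gal

section Level
variable {K : Type*} [Field K] {p q : Polynomial K}

lemma preV_finite (hpq : IsCoprime p q) (hd2 : 2 ≤ max p.natDegree q.natDegree)
    (α : P1 K) (j : ℕ) : Finite (preV (ratAct p q (Kbar K)) (P1K α) j) := by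
  have h := iterate_fiber_finite (ratAct p q (Kbar K)) (fiber_finite hpq hd2) j (P1K α)
  exact h.to_subtype

variable (p q) in
def uMap (α : P1 K) (N : ℕ) (σ : Kbar K ≃ₐ[K] Kbar K) :
    ∀ k : Fin (N + 1), Equiv.Perm (preV (ratAct p q (Kbar K)) (P1K α) k.1) :=
  fun k => permOfGal p q α σ k.1

lemma image_eq_range (α : P1 K) (N : ℕ) :
    (fun (g : ∀ k, Equiv.Perm (preV (ratAct p q (Kbar K)) (P1K α) k)) (k : Fin (N + 1)) =>
        g k.1) '' (arbGal (K := K) galP1 ⊥ (ratAct p q (Kbar K)) (P1K α))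
      = Set.range (uMap p q α N) := by
  ext t
  constructor
  · rintro ⟨g, ⟨σ, -, hco⟩, rfl⟩
    refine ⟨σ, ?_⟩
    funext k
    apply Equiv.ext
    intro β
    apply Subtype.ext
    rw [uMap, permOfGal_coe, ← hco k.1 β]
  · rintro ⟨σ, rfl⟩
    exact ⟨fun j => permOfGal p q α σ j, famOfGal_mem α σ, rfl⟩

lemma levelCard_eq_card_range (α : P1 K) (N : ℕ) :
    levelCard (arbGal (K := K) galP1 ⊥ (ratAct p q (Kbar K)) (P1K α)) N
      = Nat.card (Set.range (uMap p q α N)) := by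
  rw [levelCard, image_eq_range]

lemma uMap_eq_iff (hpq : IsCoprime p q) (hd2 : 2 ≤ max p.natDegree q.natDegree)
    (α : P1 K) (N : ℕ) (σ σ' : Kbar K ≃ₐ[K] Kbar K) :
    uMap p q α N σ = uMap p q α N σ' ↔
      ∀ β : P1 (Kbar K), (ratAct p q (Kbar K))^[N] β = P1K α → galP1 σ β = galP1 σ' β := by
  constructor
  · intro h β hβ
    have h1 := congrFun h ⟨N, Nat.lt_succ_self N⟩
    have h2 : permOfGal p q α σ N ⟨β, hβ⟩ = permOfGal p q α σ' N ⟨β, hβ⟩ := by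
      simpa [uMap] using congrFun (congrArg (fun (e : Equiv.Perm _) => e.toFun) h1) ⟨β, hβ⟩
    have h3 := congrArg Subtype.val h2
    rwa [permOfGal_coe, permOfGal_coe] at h3
  · intro h
    funext k
    apply Equiv.ext
    intro β
    apply Subtype.ext
    simp only [uMap, permOfGal_coe]
    exact top_determines hpq hd2 α σ σ' N h k.1 (by omega) β.1 β.2

lemma levelCard_matched (hpq : IsCoprime p q) (hd2 : 2 ≤ max p.natDegree q.natDegree)
    {r s : Polynomial K} (hrs : IsCoprime r s) (hd2g : 2 ≤ max r.natDegree s.natDegree)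
    (α : P1 K) {m n : ℕ}
    (hshare : (ratAct p q (Kbar K))^[m] = (ratAct r s (Kbar K))^[n]) (k : ℕ) :
    levelCard (arbGal (K := K) galP1 ⊥ (ratAct p q (Kbar K)) (P1K α)) (m * k) =
      levelCard (arbGal (K := K) galP1 ⊥ (ratAct r s (Kbar K)) (P1K α)) (n * k) := by
  rw [levelCard_eq_card_range, levelCard_eq_card_range]
  have hiter : (ratAct p q (Kbar K))^[m * k] = (ratAct r s (Kbar K))^[n * k] := by
    rw [Function.iterate_mul, Function.iterate_mul, hshare]
  apply card_range_eq
  intro a b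
  rw [uMap_eq_iff hpq hd2, uMap_eq_iff hrs hd2g, hiter]

lemma levelCard_monotone (hpq : IsCoprime p q) (hd2 : 2 ≤ max p.natDegree q.natDegree)
    (α : P1 K) :
    Monotone (levelCard (arbGal (K := K) galP1 ⊥ (ratAct p q (Kbar K)) (P1K α))) := by
  intro N N' hNN
  haveI : ∀ j, Finite (preV (ratAct p q (Kbar K)) (P1K α) j) := preV_finite hpq hd2 α
  set G := arbGal (K := K) galP1 ⊥ (ratAct p q (Kbar K)) (P1K α) with hG
  have him : (fun (g : ∀ k, Equiv.Perm (preV (ratAct p q (Kbar K)) (P1K α) k))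
        (k : Fin (N + 1)) => g k.1) '' G =
      (fun (t : ∀ k : Fin (N' + 1), Equiv.Perm (preV (ratAct p q (Kbar K)) (P1K α) k.1))
        (k : Fin (N + 1)) => t ⟨k.1, by omega⟩) ''
        ((fun (g : ∀ k, Equiv.Perm (preV (ratAct p q (Kbar K)) (P1K α) k))
          (k : Fin (N' + 1)) => g k.1) '' G) := by
    rw [← Set.image_comp]
    rfl
  rw [levelCard, levelCard, him, Nat.card_coe_set_eq, Nat.card_coe_set_eq]
  exact Set.ncard_image_le (Set.toFinite _)

lemma levelCard_pos (hpq : IsCoprime p q) (hd2 : 2 ≤ max p.natDegree q.natDegree)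
    (α : P1 K) (N : ℕ) :
    1 ≤ levelCard (arbGal (K := K) galP1 ⊥ (ratAct p q (Kbar K)) (P1K α)) N := by
  haveI : ∀ j, Finite (preV (ratAct p q (Kbar K)) (P1K α) j) := preV_finite hpq hd2 α
  rw [levelCard_eq_card_range, Nat.card_coe_set_eq]
  exact (Set.ncard_pos (Set.toFinite _)).mpr ⟨_, Set.mem_range_self 1⟩

lemma perm_level_zero (α : P1 K) (a b : Equiv.Perm (preV (ratAct p q (Kbar K)) (P1K α) 0)) :
    a = b := by
  haveI : Subsingleton (preV (ratAct p q (Kbar K)) (P1K α) 0) := by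
    constructor
    rintro ⟨x, hx⟩ ⟨y, hy⟩
    rw [Function.iterate_zero_apply] at hx hy
    exact Subtype.ext (hx.trans hy.symm)
  apply Equiv.ext
  intro x
  exact Subsingleton.elim _ _

end Level

end

theorem arboreal_shared_iterate_small {K : Type*} [Field K] [NumberField K]
    {df dg : ℕ} (hdf2 : 2 ≤ df) (hdg2 : 2 ≤ dg)
    (p q r s : Polynomial K) (hf : IsCoprime p q) (hg : IsCoprime r s)
    (hdf : max p.natDegree q.natDegree = df) (hdg : max r.natDegree s.natDegree = dg)
    (α : P1 K) (x y : ℝ)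
    (hx : HasDim df (arbGal (K := K) galP1 ⊥ (ratAct p q (Kbar K)) (P1K α)) x)
    (hy : HasDim dg (arbGal (K := K) galP1 ⊥ (ratAct r s (Kbar K)) (P1K α)) y)
    (m n : ℕ) (hm : 1 ≤ m) (hn : 1 ≤ n)
    (hshare : (ratAct p q (Kbar K))^[m] = (ratAct r s (Kbar K))^[n]) :
    x = 0 ↔ y = 0 := by
  classical
  have hd2f : 2 ≤ max p.natDegree q.natDegree := by omega
  have hd2g : 2 ≤ max r.natDegree s.natDegree := by omega
  set Gf := arbGal (K := K) galP1 ⊥ (ratAct p q (Kbar K)) (P1K α) with hGf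
  set Gg := arbGal (K := K) galP1 ⊥ (ratAct r s (Kbar K)) (P1K α) with hGg
  set A : ℕ → ℕ := fun N => levelCard Gf N with hA
  set B : ℕ → ℕ := fun N => levelCard Gg N with hB
  have hup_f : dimUpper df Gf = Filter.limsup (dimSeq df A) Filter.atTop := by
    rw [dimUpper]
    congr 1
    funext N
    rw [coverNum_eq_levelCard hdf2 (perm_level_zero α) Gf N]
    rfl
  have hup_g : dimUpper dg Gg = Filter.limsup (dimSeq dg B) Filter.atTop := by
    rw [dimUpper]
    congr 1
    funext N
    rw [coverNum_eq_levelCard hdg2 (perm_level_zero α) Gg N]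
    rfl
  have hx2 : Filter.limsup (dimSeq df A) Filter.atTop = x := by rw [← hup_f]; exact hx.2
  have hy2 : Filter.limsup (dimSeq dg B) Filter.atTop = y := by rw [← hup_g]; exact hy.2
  have hD : df ^ m = dg ^ n := by
    have h := deg_pow_eq_of_share hf hg hd2f hd2g hshare
    rwa [hdf, hdg] at h
  have hAmono : Monotone A := levelCard_monotone hf hd2f α
  have hBmono : Monotone B := levelCard_monotone hg hd2g α
  have hA1 : ∀ N, 1 ≤ A N := fun N => levelCard_pos hf hd2f α N
  have hB1 : ∀ N, 1 ≤ B N := fun N => levelCard_pos hg hd2g α N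
  have hmatch : ∀ k, A (m * k) = B (n * k) := fun k =>
    levelCard_matched hf hd2f hg hd2g α hshare k
  constructor
  · intro h0
    rw [← hy2]
    exact limsup_dimSeq_transfer hdf2 hdg2 hm hn hD hAmono hBmono hA1 hB1 hmatch
      (by rw [hx2, h0])
  · intro h0
    rw [← hx2]
    exact limsup_dimSeq_transfer hdg2 hdf2 hn hm hD.symm hBmono hAmono hB1 hA1
      (fun k => (hmatch k).symm) (by rw [hy2, h0])
end
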